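/- arXiv:1701.08018 — 4 statements merged into one kernel-verified Lean document; each statement's English description precedes it below -/
import Mathlib

section
/- Let G be a finite group and N a normal subgroup of G with |G : N| = p for some prime p. Then M'_{G,N} = − Σ_{C ≤ N, C cyclic} φ(|C|) − Σ_{Y < G, Y ≰ N} M'_{Y, Y ∩ N}, where the first sum is over all cyclic subgroups C of N, and the second sum is over all proper subgroups Y of G not contained in N, with M'_{Y, Y ∩ N} = Σ_{X ≤ Y ∩ N} |X|·μ(X,Y). -/
noncomputable instance subgroupFintype (G : Type*) [Group G] [Finite G] :
    Fintype (Subgroup G) :=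
  Fintype.ofFinite _

open Classical in
/-- The Möbius function of the lattice of subgroups of `G`, ordered by inclusion. -/
noncomputable def subgroupMu (G : Type*) [Group G] [Finite G] (X Y : Subgroup G) : ℤ :=
  letI : LocallyFiniteOrder (Subgroup G) := Fintype.toLocallyFiniteOrder
  IncidenceAlgebra.mu ℤ X Y

open Classical in
/-- `Mprime G Y M = Σ_{X ≤ M} |X| · μ(X, Y)`.  In particular `Mprime G ⊤ N` is the
quantity `M'_{G,N} = Σ_{X ≤ N} |X| · μ(X, G)` of the paper. -/
noncomputable def Mprime (G : Type*) [Group G] [Finite G] (Y M : Subgroup G) : ℤ :=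
  ∑ X : Subgroup G, if X ≤ M then (Nat.card X : ℤ) * subgroupMu G X Y else 0

section Aux

open Classical

variable {G : Type*} [Group G] [Finite G]

lemma muSum (X M : Subgroup G) :
    ∑ Y : Subgroup G, (if X ≤ Y ∧ Y ≤ M then subgroupMu G X Y else 0)
      = if X = M then 1 else 0 := by
  letI : LocallyFiniteOrder (Subgroup G) := Fintype.toLocallyFiniteOrder
  unfold subgroupMu
  rw [← Finset.sum_filter]
  have h : Finset.univ.filter (fun Y : Subgroup G => X ≤ Y ∧ Y ≤ M) = Finset.Icc X M := by
    ext Y; simp [Finset.mem_Icc]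
  rw [h]
  exact IncidenceAlgebra.sum_Icc_mu_right X M

lemma Ssum_eq_zero (N : Subgroup G) (hN : N ≠ ⊤) :
    ∑ Y : Subgroup G, Mprime G Y (Y ⊓ N) = 0 := by
  unfold Mprime
  rw [Finset.sum_comm]
  apply Finset.sum_eq_zero
  intro X _
  by_cases hXN : X ≤ N
  · have h1 : ∀ Y : Subgroup G,
        (if X ≤ Y ⊓ N then (Nat.card X : ℤ) * subgroupMu G X Y else 0)
          = (Nat.card X : ℤ) * (if X ≤ Y ∧ Y ≤ ⊤ then subgroupMu G X Y else 0) := by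
      intro Y
      simp [le_inf_iff, hXN, mul_ite]
    rw [Finset.sum_congr rfl (fun Y _ => h1 Y), ← Finset.mul_sum, muSum]
    have hX : X ≠ ⊤ := fun h => hN (top_le_iff.mp (h ▸ hXN))
    simp [hX]
  · apply Finset.sum_eq_zero
    intro Y _
    have : ¬ X ≤ Y ⊓ N := fun h => hXN (h.trans inf_le_right)
    simp [this]

lemma Tsum (N : Subgroup G) :
    ∑ Y : Subgroup G, (if Y ≤ N then Mprime G Y Y else 0) = (Nat.card N : ℤ) := by
  unfold Mprime
  have h1 : ∀ Y : Subgroup G,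
      (if Y ≤ N then ∑ X : Subgroup G,
          (if X ≤ Y then (Nat.card X : ℤ) * subgroupMu G X Y else 0) else 0)
        = ∑ X : Subgroup G,
          (Nat.card X : ℤ) * (if X ≤ Y ∧ Y ≤ N then subgroupMu G X Y else 0) := by
    intro Y
    by_cases hY : Y ≤ N
    · simp [hY, mul_ite]
    · simp [hY]
  rw [Finset.sum_congr rfl (fun Y _ => h1 Y), Finset.sum_comm]
  have h2 : ∀ X : Subgroup G,
      ∑ Y : Subgroup G, (Nat.card X : ℤ) * (if X ≤ Y ∧ Y ≤ N then subgroupMu G X Y else 0)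
        = if X = N then (Nat.card X : ℤ) else 0 := by
    intro X
    rw [← Finset.mul_sum, muSum]
    by_cases h : X = N <;> simp [h]
  rw [Finset.sum_congr rfl (fun X _ => h2 X), Finset.sum_ite_eq' Finset.univ N]
  simp

lemma isCyclic_zpowers (g : G) : IsCyclic (Subgroup.zpowers g) := by
  refine ⟨⟨⟨g, Subgroup.mem_zpowers g⟩, fun x => ?_⟩⟩
  obtain ⟨k, hk⟩ := Subgroup.mem_zpowers_iff.mp x.2
  exact ⟨k, Subtype.ext (by simpa using hk)⟩

lemma cardSum (N : Subgroup G) :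
    ∑ C : Subgroup G, (if C ≤ N ∧ IsCyclic ↥C then (Nat.totient (Nat.card C) : ℤ) else 0)
      = (Nat.card N : ℤ) := by
  classical
  haveI : Fintype ↥N := Fintype.ofFinite _
  have key : ∑ C ∈ Finset.univ.filter (fun C : Subgroup G => C ≤ N ∧ IsCyclic ↥C),
      Nat.totient (Nat.card C) = Nat.card ↥N := by
    rw [Nat.card_eq_fintype_card, ← Finset.card_univ]
    rw [Finset.card_eq_sum_card_fiberwise
      (f := fun n : ↥N => Subgroup.zpowers (n : G))
      (t := Finset.univ.filter (fun C : Subgroup G => C ≤ N ∧ IsCyclic ↥C))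
      (fun n _ => by
        simp only [Finset.mem_coe, Finset.mem_filter, Finset.mem_univ, true_and]
        exact ⟨Subgroup.zpowers_le.mpr n.2, isCyclic_zpowers _⟩)]
    refine Finset.sum_congr rfl (fun C hC => ?_)
    obtain ⟨hCN, hCyc⟩ := (Finset.mem_filter.mp hC).2
    haveI : Fintype ↥C := Fintype.ofFinite _
    haveI : IsCyclic ↥C := hCyc
    have hcard := IsCyclic.card_orderOf_eq_totient (α := ↥C) (d := Fintype.card ↥C) dvd_rfl
    rw [Nat.card_eq_fintype_card, ← hcard]
    symm
    apply Finset.card_bij (fun (n : ↥N) hn =>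
      (⟨(n : G), by
        have := (Finset.mem_filter.mp hn).2
        rw [← this]; exact Subgroup.mem_zpowers _⟩ : ↥C))
    · intro n hn
      have h := (Finset.mem_filter.mp hn).2
      simp only [Finset.mem_filter, Finset.mem_univ, true_and]
      show orderOf _ = Fintype.card ↥C
      rw [Subgroup.orderOf_mk, ← Nat.card_zpowers, h, Nat.card_eq_fintype_card]
    · intro a ha b hb hab
      have h : (a : G) = (b : G) := congrArg (fun z : ↥C => (z : G)) hab
      exact Subtype.ext h
    · intro a ha
      have haord : orderOf a = Fintype.card ↥C := (Finset.mem_filter.mp ha).2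
      have hmemN : (a : G) ∈ N := hCN a.2
      refine ⟨⟨(a : G), hmemN⟩, ?_, rfl⟩
      simp only [Finset.mem_filter, Finset.mem_univ, true_and]
      apply Subgroup.eq_of_le_of_card_ge (Subgroup.zpowers_le.mpr a.2)
      rw [Nat.card_zpowers, Subgroup.orderOf_coe, haord, Nat.card_eq_fintype_card]
  rw [← Finset.sum_filter, ← key]
  push_cast
  rfl

end Aux

open Classical in
/-- If `N ⊴ G` has prime index `p`, then
`M'_{G,N} = − Σ_{C ≤ N, C cyclic} φ(|C|) − Σ_{Y < G, Y ≰ N} M'_{Y, Y ∩ N}`. -/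
theorem stmt5 (G : Type*) [Group G] [Finite G] (N : Subgroup G) (hN : N.Normal)
    (p : ℕ) (hp : p.Prime) (hidx : N.index = p) :
    Mprime G ⊤ N =
      - (∑ C : Subgroup G, if C ≤ N ∧ IsCyclic ↥C then (Nat.totient (Nat.card C) : ℤ) else 0)
      - ∑ Y : Subgroup G, if Y < ⊤ ∧ ¬ Y ≤ N then Mprime G Y (Y ⊓ N) else 0 := by
  have hNtop : N ≠ ⊤ := by
    intro h
    rw [h, Subgroup.index_top] at hidx
    exact hp.ne_one hidx.symm
  have hsplit : ∀ Y : Subgroup G, Mprime G Y (Y ⊓ N) =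
      (if Y ≤ N then Mprime G Y Y else 0)
        + (if Y < ⊤ ∧ ¬ Y ≤ N then Mprime G Y (Y ⊓ N) else 0)
        + (if Y = ⊤ then Mprime G ⊤ N else 0) := by
    intro Y
    by_cases h1 : Y ≤ N
    · have h2 : Y ≠ ⊤ := fun h => hNtop (top_le_iff.mp (h ▸ h1))
      simp [h1, h2, inf_eq_left.mpr h1]
    · by_cases h3 : Y = ⊤
      · subst h3
        simp [h1, lt_irrefl, top_inf_eq]
      · have h4 : Y < ⊤ := lt_top_iff_ne_top.mpr h3
        simp [h1, h3, h4]
  have hS := Ssum_eq_zero N hNtop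
  rw [Finset.sum_congr rfl (fun Y _ => hsplit Y)] at hS
  rw [Finset.sum_add_distrib, Finset.sum_add_distrib, Tsum N,
    Finset.sum_ite_eq' Finset.univ (⊤ : Subgroup G)] at hS
  simp only [Finset.mem_univ, if_true] at hS
  have hC := cardSum N
  linarith
end

section
/- Let G be a finite group which is not cyclic and let N be a normal subgroup of G with |G : N| = p for some prime p. If χ(T_C(G)) = 1 for every cyclic subgroup C of N (as holds, in particular, when each geometric realization |N(T_C(G))| is contractible), then m_{G,N} = 0. -/
open Classical in
/-- Bouc's rational number `m_{G,N} = (1/|G|) · Σ_{X ≤ G, XN = G} |X| · μ(X, G)`. -/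
noncomputable def mBouc (G : Type*) [Group G] [Finite G] (N : Subgroup G) : ℚ :=
  (1 / (Nat.card G : ℚ)) *
    ∑ X : Subgroup G, if X ⊔ N = ⊤ then (Nat.card X : ℚ) * ((subgroupMu G X ⊤ : ℤ) : ℚ) else 0

/-- The poset `T_C(G)` of all subgroups `X` of `G` with `C ≤ X`, `X` a proper subgroup
of `G`, and `X` not contained in `N`, ordered by inclusion. -/
def TCposet (G : Type*) [Group G] (N C : Subgroup G) : Set (Subgroup G) :=
  {X | C ≤ X ∧ X < ⊤ ∧ ¬ X ≤ N}

/-- `chainCount G N C i` is the number `c_i` of strictly increasing chains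
`X_0 < X_1 < ⋯ < X_i` of elements of `T_C(G)`. -/
noncomputable def chainCount (G : Type*) [Group G] [Finite G] (N C : Subgroup G) (i : ℕ) : ℕ :=
  Nat.card {s : LTSeries (TCposet G N C) // s.length = i}

/-- The Euler characteristic `χ(T_C(G)) = Σ_{i ≥ 0} (-1)^i c_i` of (the geometric
realization of the nerve of) the poset `T_C(G)`. -/
noncomputable def eulerCharTC (G : Type*) [Group G] [Finite G] (N C : Subgroup G) : ℤ :=
  ∑ᶠ i : ℕ, (-1 : ℤ) ^ i * chainCount G N C i

open Classical Finset

section Aux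

variable (G : Type*) [Group G] [Finite G]

noncomputable instance : LocallyFiniteOrder (Subgroup G) := Fintype.toLocallyFiniteOrder

/-- the finset of strict chains `X = f 0 < ... < f (last k) = ⊤`. -/
noncomputable def chainF (k : ℕ) (X : Subgroup G) : Finset (Fin (k + 1) → Subgroup G) :=
  univ.filter (fun f => StrictMono f ∧ f 0 = X ∧ f (Fin.last k) = ⊤)

noncomputable def Hk (k : ℕ) (X : Subgroup G) : ℕ := (chainF G k X).card

variable {G}

lemma Hk_zero (X : Subgroup G) : Hk G 0 X = if X = ⊤ then 1 else 0 := by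
  unfold Hk chainF
  split_ifs with h
  · subst h
    rw [Finset.card_eq_one]
    refine ⟨fun _ => ⊤, ?_⟩
    ext f
    simp only [mem_filter, mem_univ, true_and, mem_singleton]
    constructor
    · rintro ⟨-, h0, -⟩
      funext j
      rw [show j = 0 from Fin.ext (Nat.lt_one_iff.mp j.isLt), h0]
    · rintro rfl
      refine ⟨fun a b hab => ?_, rfl, rfl⟩
      have hab' : a = b := Fin.ext (by have := a.isLt; have := b.isLt; omega)
      exact absurd hab (hab' ▸ lt_irrefl a)
  · rw [Finset.card_eq_zero]
    ext f
    simp only [mem_filter, mem_univ, true_and, notMem_empty, iff_false]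
    rintro ⟨-, h0, hl⟩
    rw [show Fin.last 0 = 0 from rfl] at hl
    rw [h0] at hl
    exact h hl

lemma Hk_top (k : ℕ) : Hk G (k + 1) ⊤ = 0 := by
  unfold Hk chainF
  rw [Finset.card_eq_zero]
  ext f
  simp only [mem_filter, mem_univ, true_and, notMem_empty, iff_false]
  rintro ⟨hf, h0, hl⟩
  have h01 : (0 : Fin (k + 2)) < Fin.last (k + 1) := by simp [Fin.lt_def]
  have := hf h01
  rw [h0, hl] at this
  exact lt_irrefl _ this

lemma Hk_vanish (k : ℕ) (hk : Fintype.card (Subgroup G) ≤ k) (X : Subgroup G) :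
    Hk G k X = 0 := by
  unfold Hk chainF
  rw [Finset.card_eq_zero]
  ext f
  simp only [mem_filter, mem_univ, true_and, notMem_empty, iff_false]
  rintro ⟨hf, -, -⟩
  have h2 := Fintype.card_le_of_injective f hf.injective
  rw [Fintype.card_fin] at h2
  omega

lemma cons_strictMono {k : ℕ} {X : Subgroup G} {g : Fin (k + 1) → Subgroup G}
    (hg : StrictMono g) (hX : X < g 0) : StrictMono (Fin.cons X g) := by
  rw [Fin.strictMono_iff_lt_succ]
  intro i
  induction i using Fin.cases with
  | zero => simpa using hX
  | succ j =>
    have h1 : Fin.castSucc j.succ = Fin.succ (Fin.castSucc j) := rfl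
    rw [h1, Fin.cons_succ, Fin.cons_succ]
    exact hg (show Fin.castSucc j < j.succ from Fin.castSucc_lt_succ)

lemma snoc_strictMono {k : ℕ} {g : Fin (k + 1) → Subgroup G}
    (hg : StrictMono g) (hlt : ∀ j, g j < ⊤) : StrictMono (Fin.snoc g ⊤) := by
  intro a b hab
  induction b using Fin.lastCases with
  | last =>
    have ha : a ≠ Fin.last (k + 1) := hab.ne
    obtain ⟨a', rfl⟩ := Fin.exists_castSucc_eq.mpr ha
    rw [Fin.snoc_castSucc, Fin.snoc_last]
    exact hlt a'
  | cast b' =>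
    have ha : a ≠ Fin.last (k + 1) := (hab.trans (Fin.castSucc_lt_last b')).ne
    obtain ⟨a', rfl⟩ := Fin.exists_castSucc_eq.mpr ha
    rw [Fin.snoc_castSucc, Fin.snoc_castSucc]
    exact hg (Fin.castSucc_lt_castSucc_iff.mp hab)

lemma Hk_succ (k : ℕ) (X : Subgroup G) :
    Hk G (k + 1) X = ∑ Y ∈ univ.filter (fun Y => X < Y), Hk G k Y := by
  unfold Hk
  rw [Finset.card_eq_sum_card_fiberwise
    (f := fun f => f 1) (t := univ.filter (fun Y => X < Y)) ?_]
  · refine Finset.sum_congr rfl (fun Y hY => ?_)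
    rw [mem_filter] at hY
    refine Finset.card_bij (fun f _ => f ∘ Fin.succ) ?_ ?_ ?_
    · rintro f hf
      rw [mem_filter] at hf
      obtain ⟨hmem, h1⟩ := hf
      rw [chainF, mem_filter] at hmem ⊢
      obtain ⟨-, hSM, h0, hl⟩ := hmem
      refine ⟨mem_univ _, hSM.comp Fin.strictMono_succ, h1, ?_⟩
      show f (Fin.succ (Fin.last k)) = ⊤
      rw [Fin.succ_last]
      exact hl
    · rintro f hf g hg hfg
      rw [mem_filter, chainF, mem_filter] at hf hg
      funext j
      induction j using Fin.cases with
      | zero => rw [hf.1.2.2.1, hg.1.2.2.1]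
      | succ i => exact congrFun hfg i
    · rintro g hg
      rw [chainF, mem_filter] at hg
      obtain ⟨-, hSM, h0, hl⟩ := hg
      refine ⟨(Fin.cons X g : Fin (k + 2) → Subgroup G), ?_, ?_⟩
      · rw [mem_filter, chainF, mem_filter]
        have hXg : X < g 0 := h0 ▸ hY.2
        have hcons_last : (Fin.cons X g : Fin (k + 2) → Subgroup G) (Fin.last (k + 1)) = ⊤ := by
          rw [show Fin.last (k + 1) = Fin.succ (Fin.last k) from rfl, Fin.cons_succ]; exact hl
        have hcons_one : (Fin.cons X g : Fin (k + 2) → Subgroup G) (1 : Fin (k + 2)) = Y := by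
          rw [show (1 : Fin (k + 2)) = Fin.succ 0 from rfl, Fin.cons_succ]; exact h0
        exact ⟨⟨mem_univ _, cons_strictMono hSM hXg, rfl, hcons_last⟩, hcons_one⟩
      · funext j
        simp [Fin.cons_succ]
  · intro f hf
    rw [chainF, Finset.mem_coe, mem_filter] at hf
    obtain ⟨-, hSM, h0, -⟩ := hf
    rw [Finset.mem_coe, mem_filter]
    refine ⟨mem_univ _, ?_⟩
    have : f 0 < f 1 := hSM (by simp [Fin.lt_def])
    rwa [h0] at this

lemma hall (X : Subgroup G) :
    subgroupMu G X ⊤ =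
      ∑ k ∈ range (Fintype.card (Subgroup G)), (-1 : ℤ) ^ k * Hk G k X := by
  refine (IsWellFounded.wf (r := ((· > ·) : Subgroup G → Subgroup G → Prop))).induction
    (C := fun X => subgroupMu G X ⊤ =
      ∑ k ∈ range (Fintype.card (Subgroup G)), (-1 : ℤ) ^ k * Hk G k X) X ?_
  clear X
  intro X IH
  obtain ⟨n, hn⟩ : ∃ n, Fintype.card (Subgroup G) = n + 1 :=
    ⟨Fintype.card (Subgroup G) - 1, by have := Fintype.card_pos (α := Subgroup G); omega⟩
  by_cases hX : X = ⊤
  · subst hX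
    have hmu : subgroupMu G ⊤ ⊤ = 1 := by
      simp [subgroupMu]
    rw [hmu, Finset.sum_eq_single 0]
    · simp [Hk_zero]
    · rintro (_ | b) hb hb0
      · exact absurd rfl hb0
      · simp [Hk_top]
    · intro h
      exact absurd (mem_range.mpr (by omega)) h
  · have hmu : subgroupMu G X ⊤ = -∑ Y ∈ Finset.Ioc X ⊤, subgroupMu G Y ⊤ := by
      simpa [subgroupMu] using IncidenceAlgebra.mu_eq_neg_sum_Ioc_of_ne (𝕜 := ℤ) hX
    have hIoc : Finset.Ioc X ⊤ = univ.filter (fun Y => X < Y) := by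
      ext Y
      simp [Finset.mem_Ioc, le_top]
    rw [hmu, hIoc]
    have hstep : ∑ Y ∈ univ.filter (fun Y => X < Y), subgroupMu G Y ⊤ =
        ∑ k ∈ range (n + 1), (-1 : ℤ) ^ k * Hk G (k + 1) X := by
      calc ∑ Y ∈ univ.filter (fun Y => X < Y), subgroupMu G Y ⊤
          = ∑ Y ∈ univ.filter (fun Y => X < Y),
              ∑ k ∈ range (n + 1), (-1 : ℤ) ^ k * Hk G k Y := by
            refine Finset.sum_congr rfl fun Y hY => ?_
            rw [mem_filter] at hY
            rw [← hn]
            exact IH Y hY.2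
        _ = ∑ k ∈ range (n + 1), (-1 : ℤ) ^ k *
              ∑ Y ∈ univ.filter (fun Y => X < Y), (Hk G k Y : ℤ) := by
            rw [Finset.sum_comm]
            refine Finset.sum_congr rfl fun k _ => ?_
            rw [Finset.mul_sum]
        _ = ∑ k ∈ range (n + 1), (-1 : ℤ) ^ k * Hk G (k + 1) X := by
            refine Finset.sum_congr rfl fun k _ => ?_
            rw [Hk_succ]
            push_cast
            ring
    rw [hstep, hn]
    rw [Finset.sum_range_succ' (fun k => (-1 : ℤ) ^ k * Hk G k X) n]
    have h0 : (-1 : ℤ) ^ 0 * (Hk G 0 X : ℤ) = 0 := by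
      rw [Hk_zero, if_neg hX]
      simp
    rw [h0, add_zero]
    rw [Finset.sum_range_succ (fun k => (-1 : ℤ) ^ k * Hk G (k + 1) X) n]
    have hv : Hk G (n + 1) X = 0 := Hk_vanish (n + 1) (by omega) X
    rw [hv]
    push_cast
    rw [mul_zero, add_zero, neg_eq_iff_eq_neg, ← Finset.sum_neg_distrib]
    refine Finset.sum_congr rfl fun k _ => ?_
    ring

end Aux

section TC

variable {G : Type*} [Group G] [Finite G] (N C : Subgroup G)

noncomputable def chainEquiv (k : ℕ) :
    {s : LTSeries (TCposet G N C) // s.length = k} ≃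
      {f : Fin (k + 1) → Subgroup G // StrictMono f ∧ ∀ j, f j ∈ TCposet G N C} where
  toFun s := ⟨fun j => (s.1 (Fin.cast (by rw [s.2]) j) : Subgroup G),
    fun a b hab => by
      have h := s.1.strictMono (a := Fin.cast (by rw [s.2]) a) (b := Fin.cast (by rw [s.2]) b)
        (show _ < _ from hab)
      exact_mod_cast h,
    fun j => (s.1 (Fin.cast (by rw [s.2]) j)).2⟩
  invFun f := ⟨⟨k, fun j => ⟨f.1 j, f.2.2 j⟩, fun j => by
    show (⟨f.1 j.castSucc, f.2.2 _⟩ : TCposet G N C) < ⟨f.1 j.succ, f.2.2 _⟩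
    exact Subtype.mk_lt_mk.mpr (f.2.1 (show Fin.castSucc j < j.succ from Fin.castSucc_lt_succ))⟩, rfl⟩
  left_inv s := by
    obtain ⟨⟨n, g, hg⟩, hn⟩ := s
    dsimp only at hn
    subst hn
    refine Subtype.ext (RelSeries.ext rfl ?_)
    funext j
    simp [Fin.cast]
  right_inv f := by
    refine Subtype.ext ?_
    funext j
    simp [Fin.cast]

lemma chainCount_eq (k : ℕ) :
    chainCount G N C k =
      (univ.filter (fun f : Fin (k + 1) → Subgroup G =>
        StrictMono f ∧ ∀ j, f j ∈ TCposet G N C)).card := by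
  rw [chainCount, Nat.card_congr (chainEquiv N C k), Nat.card_eq_fintype_card,
    Fintype.card_subtype]

lemma chainCount_vanish (k : ℕ) (hk : Fintype.card (Subgroup G) ≤ k + 1) :
    chainCount G N C k = 0 := by
  rw [chainCount_eq, Finset.card_eq_zero]
  ext f
  simp only [mem_filter, mem_univ, true_and, notMem_empty, iff_false]
  rintro ⟨hSM, hT⟩
  have hinj : Function.Injective (fun j => (⟨f j, (hT j).2.1.ne⟩ :
      {Y : Subgroup G // Y ≠ ⊤})) := by
    intro a b hab
    exact hSM.injective (congrArg Subtype.val hab)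
  have h1 := Fintype.card_le_of_injective _ hinj
  have h2 : Fintype.card {Y : Subgroup G // Y ≠ ⊤} < Fintype.card (Subgroup G) :=
    Fintype.card_subtype_lt (x := (⊤ : Subgroup G)) (by simp)
  rw [Fintype.card_fin] at h1
  omega

lemma sum_Hk_zero :
    ∑ X ∈ univ.filter (fun X => X ∈ TCposet G N C), Hk G 0 X = 0 := by
  refine Finset.sum_eq_zero fun X hX => ?_
  rw [mem_filter] at hX
  rw [Hk_zero, if_neg hX.2.2.1.ne]

lemma sum_Hk_succ (k : ℕ) :
    ∑ X ∈ univ.filter (fun X => X ∈ TCposet G N C), Hk G (k + 1) X =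
      chainCount G N C k := by
  rw [chainCount_eq]
  have h1 : ∑ X ∈ univ.filter (fun X => X ∈ TCposet G N C), Hk G (k + 1) X =
      (univ.filter (fun f : Fin (k + 2) → Subgroup G =>
        StrictMono f ∧ f 0 ∈ TCposet G N C ∧ f (Fin.last (k + 1)) = ⊤)).card := by
    rw [Finset.card_eq_sum_card_fiberwise
      (f := fun f => f 0) (t := univ.filter (fun X => X ∈ TCposet G N C)) ?_]
    · refine Finset.sum_congr rfl fun X hX => ?_
      rw [mem_filter] at hX
      unfold Hk
      congr 1
      ext f
      rw [chainF, mem_filter, mem_filter, mem_filter]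
      constructor
      · rintro ⟨-, hSM, h0, hl⟩
        exact ⟨⟨mem_univ _, hSM, h0 ▸ hX.2, hl⟩, h0⟩
      · rintro ⟨⟨-, hSM, -, hl⟩, h0⟩
        exact ⟨mem_univ _, hSM, h0, hl⟩
    · intro f hf
      rw [Finset.mem_coe, mem_filter] at hf
      rw [Finset.mem_coe, mem_filter]
      exact ⟨mem_univ _, hf.2.2.1⟩
  rw [h1]
  refine Finset.card_bij (fun f _ => f ∘ Fin.castSucc) ?_ ?_ ?_
  · rintro f hf
    rw [mem_filter] at hf
    obtain ⟨-, hSM, h0, hl⟩ := hf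
    rw [mem_filter]
    refine ⟨mem_univ _, hSM.comp Fin.strictMono_castSucc, fun j => ?_⟩
    have hle : f 0 ≤ f (Fin.castSucc j) := hSM.monotone (Fin.zero_le _)
    refine ⟨h0.1.trans hle, ?_, fun hle' => h0.2.2 (hle.trans hle')⟩
    have : f (Fin.castSucc j) < f (Fin.last (k + 1)) := hSM (Fin.castSucc_lt_last j)
    rwa [hl] at this
  · rintro f hf g hg hfg
    rw [mem_filter] at hf hg
    funext j
    induction j using Fin.lastCases with
    | last => rw [hf.2.2.2, hg.2.2.2]
    | cast i => exact congrFun hfg i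
  · rintro g hg
    rw [mem_filter] at hg
    obtain ⟨-, hSM, hT⟩ := hg
    refine ⟨(Fin.snoc g ⊤ : Fin (k + 2) → Subgroup G), ?_, ?_⟩
    · rw [mem_filter]
      have hSM' : StrictMono (Fin.snoc g ⊤ : Fin (k + 2) → Subgroup G) :=
        snoc_strictMono hSM (fun j => (hT j).2.1)
      have h0 : (Fin.snoc g ⊤ : Fin (k + 2) → Subgroup G) 0 = g 0 := by
        rw [show (0 : Fin (k + 2)) = Fin.castSucc 0 from rfl, Fin.snoc_castSucc]
      refine ⟨mem_univ _, hSM', ?_, ?_⟩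
      · rw [h0]; exact hT 0
      · rw [Fin.snoc_last]
    · funext j
      simp [Fin.snoc_castSucc]

lemma sum_mu_TC :
    ∑ X ∈ univ.filter (fun X => X ∈ TCposet G N C), subgroupMu G X ⊤ =
      -∑ᶠ i : ℕ, (-1 : ℤ) ^ i * chainCount G N C i := by
  obtain ⟨n, hn⟩ : ∃ n, Fintype.card (Subgroup G) = n + 1 :=
    ⟨Fintype.card (Subgroup G) - 1, by have := Fintype.card_pos (α := Subgroup G); omega⟩
  have heuler : ∑ᶠ i : ℕ, (-1 : ℤ) ^ i * chainCount G N C i =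
      ∑ i ∈ range n, (-1 : ℤ) ^ i * chainCount G N C i := by
    refine finsum_eq_sum_of_support_subset _ ?_
    intro i hi
    simp only [Function.mem_support] at hi
    simp only [Finset.coe_range, Set.mem_Iio]
    by_contra h
    rw [chainCount_vanish N C i (by omega)] at hi
    simp at hi
  rw [heuler]
  calc ∑ X ∈ univ.filter (fun X => X ∈ TCposet G N C), subgroupMu G X ⊤
      = ∑ X ∈ univ.filter (fun X => X ∈ TCposet G N C),
          ∑ k ∈ range (n + 1), (-1 : ℤ) ^ k * Hk G k X := by
        refine Finset.sum_congr rfl fun X _ => ?_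
        rw [hall X, hn]
    _ = ∑ k ∈ range (n + 1), (-1 : ℤ) ^ k *
          ∑ X ∈ univ.filter (fun X => X ∈ TCposet G N C), (Hk G k X : ℤ) := by
        rw [Finset.sum_comm]
        exact Finset.sum_congr rfl fun k _ => by rw [Finset.mul_sum]
    _ = -∑ i ∈ range n, (-1 : ℤ) ^ i * chainCount G N C i := by
        rw [Finset.sum_range_succ' (fun k => (-1 : ℤ) ^ k *
          ∑ X ∈ univ.filter (fun X => X ∈ TCposet G N C), (Hk G k X : ℤ)) n]
        have h0 : ∑ X ∈ univ.filter (fun X => X ∈ TCposet G N C), (Hk G 0 X : ℤ) = 0 := by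
          rw [← Nat.cast_sum, sum_Hk_zero]
          rfl
        rw [h0]
        simp only [pow_zero, one_mul, mul_zero, add_zero]
        rw [← Finset.sum_neg_distrib]
        refine Finset.sum_congr rfl fun k _ => ?_
        have hs : ∑ X ∈ univ.filter (fun X => X ∈ TCposet G N C), (Hk G (k + 1) X : ℤ) =
            (chainCount G N C k : ℤ) := by
          rw [← Nat.cast_sum, sum_Hk_succ]
        rw [hs]
        ring

end TC

section Main

variable {G : Type*} [Group G] [Finite G]

lemma zpowers_isCyclic (g : G) : IsCyclic ↥(Subgroup.zpowers g) := by
  refine ⟨⟨⟨g, Subgroup.mem_zpowers g⟩, ?_⟩⟩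
  rintro ⟨y, hy⟩
  obtain ⟨m, rfl⟩ := hy
  refine ⟨m, ?_⟩
  ext
  simp

lemma bouc_inner_sum (hG : ¬ IsCyclic G) (N : Subgroup G) (hNtop : N ≠ ⊤)
    (heuler : ∀ C : Subgroup G, C ≤ N → IsCyclic ↥C →
      ∑ᶠ i : ℕ, (-1 : ℤ) ^ i * chainCount G N C i = 1) (g : G) :
    ∑ X : Subgroup G, (if ¬ X ≤ N ∧ g ∈ X then subgroupMu G X ⊤ else 0) = 0 := by
  set C := Subgroup.zpowers g with hC
  rw [← Finset.sum_filter]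
  by_cases hCN : C ≤ N
  · -- the filter set is insert ⊤ TF
    have hset : univ.filter (fun X : Subgroup G => ¬ X ≤ N ∧ g ∈ X) =
        insert ⊤ (univ.filter (fun X => X ∈ TCposet G N C)) := by
      ext X
      simp only [mem_filter, mem_univ, true_and, mem_insert]
      constructor
      · rintro ⟨hXN, hgX⟩
        by_cases hXt : X = ⊤
        · exact Or.inl hXt
        · exact Or.inr ⟨Subgroup.zpowers_le.mpr hgX, lt_top_iff_ne_top.mpr hXt, hXN⟩
      · rintro (rfl | hX)
        · exact ⟨fun h => hNtop (top_le_iff.mp h), Subgroup.mem_top g⟩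
        · exact ⟨hX.2.2, hX.1 (Subgroup.mem_zpowers g)⟩
    rw [hset, Finset.sum_insert (by
      simp only [mem_filter, mem_univ, true_and]
      rintro ⟨-, h, -⟩
      exact lt_irrefl _ h)]
    have htop : subgroupMu G ⊤ ⊤ = 1 := by simp [subgroupMu]
    rw [htop, sum_mu_TC, heuler C hCN (zpowers_isCyclic g)]
    ring
  · -- the filter set is Icc C ⊤
    have hset : univ.filter (fun X : Subgroup G => ¬ X ≤ N ∧ g ∈ X) = Finset.Icc C ⊤ := by
      ext X
      simp only [mem_filter, mem_univ, true_and, Finset.mem_Icc, le_top, and_true]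
      constructor
      · rintro ⟨-, hgX⟩
        exact Subgroup.zpowers_le.mpr hgX
      · intro hCX
        exact ⟨fun hXN => hCN (hCX.trans hXN), hCX (Subgroup.mem_zpowers g)⟩
    have hCtop : C ≠ ⊤ := by
      intro h
      refine hG ⟨⟨g, fun x => ?_⟩⟩
      have : x ∈ C := h ▸ Subgroup.mem_top x
      exact this
    rw [hset]
    have := IncidenceAlgebra.sum_Icc_mu_left (𝕜 := ℤ) C (⊤ : Subgroup G)
    rw [if_neg hCtop] at this
    simpa [subgroupMu] using this

theorem main_sum (hG : ¬ IsCyclic G) (N : Subgroup G) (hNtop : N ≠ ⊤)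
    (heuler : ∀ C : Subgroup G, C ≤ N → IsCyclic ↥C →
      ∑ᶠ i : ℕ, (-1 : ℤ) ^ i * chainCount G N C i = 1) :
    ∑ X : Subgroup G, (if ¬ X ≤ N then (Nat.card X : ℤ) * subgroupMu G X ⊤ else 0) = 0 := by
  haveI : Fintype G := Fintype.ofFinite G
  have hswap : ∑ X : Subgroup G, (if ¬ X ≤ N then (Nat.card X : ℤ) * subgroupMu G X ⊤ else 0) =
      ∑ g : G, ∑ X : Subgroup G, (if ¬ X ≤ N ∧ g ∈ X then subgroupMu G X ⊤ else 0) := by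
    rw [Finset.sum_comm]
    refine Finset.sum_congr rfl fun X _ => ?_
    by_cases hXN : X ≤ N
    · simp [hXN]
    · simp only [hXN, not_false_iff, if_true, true_and]
      have hcard : (Nat.card X : ℤ) = ∑ g : G, (if g ∈ X then (1 : ℤ) else 0) := by
        rw [Nat.card_eq_fintype_card, Fintype.card_subtype, Finset.card_filter]
        push_cast
        rfl
      rw [hcard, Finset.sum_mul]
      refine Finset.sum_congr rfl fun g _ => ?_
      by_cases hg : g ∈ X <;> simp [hg]
  rw [hswap]
  exact Finset.sum_eq_zero fun g _ => bouc_inner_sum hG N hNtop heuler g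

end Main

/-- If `G` is not cyclic, `N ⊴ G` has prime index `p`, and `χ(T_C(G)) = 1` for every
cyclic subgroup `C` of `N`, then `m_{G,N} = 0`. -/
theorem stmt11 (G : Type*) [Group G] [Finite G] (hG : ¬ IsCyclic G)
    (N : Subgroup G) (hN : N.Normal) (p : ℕ) (hp : p.Prime) (hidx : N.index = p)
    (hchi : ∀ C : Subgroup G, C ≤ N → IsCyclic ↥C → eulerCharTC G N C = 1) :
    mBouc G N = 0 := by
  classical
  have hNtop : N ≠ ⊤ := by
    intro h
    rw [h, Subgroup.index_top] at hidx
    exact hp.ne_one hidx.symm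
  have hmax : ∀ X : Subgroup G, ¬ X ≤ N → X ⊔ N = ⊤ := by
    intro X hX
    have hle : N ≤ X ⊔ N := le_sup_right
    have hdvd : (X ⊔ N).index ∣ N.index := Subgroup.index_dvd_of_le hle
    rw [hidx] at hdvd
    rcases (Nat.Prime.eq_one_or_self_of_dvd hp _ hdvd) with h1 | hP
    · exact Subgroup.index_eq_one.mp h1
    · exfalso
      have hrm := Subgroup.relIndex_mul_index hle
      rw [hP, hidx] at hrm
      have hrel : N.relIndex (X ⊔ N) = 1 :=
        Nat.eq_of_mul_eq_mul_right hp.pos (by rw [hrm, one_mul])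
      have hXN : X ⊔ N ≤ N := Subgroup.relIndex_eq_one.mp hrel
      exact hX (le_sup_left.trans hXN)
  have heuler : ∀ C : Subgroup G, C ≤ N → IsCyclic ↥C →
      ∑ᶠ i : ℕ, (-1 : ℤ) ^ i * chainCount G N C i = 1 := fun C h1 h2 => hchi C h1 h2
  have hS : ∑ X : Subgroup G,
      (if X ⊔ N = ⊤ then (Nat.card X : ℚ) * ((subgroupMu G X ⊤ : ℤ) : ℚ) else 0) = 0 := by
    calc ∑ X : Subgroup G,
        (if X ⊔ N = ⊤ then (Nat.card X : ℚ) * ((subgroupMu G X ⊤ : ℤ) : ℚ) else 0)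
        = ∑ X : Subgroup G,
            ((if ¬ X ≤ N then (Nat.card X : ℤ) * subgroupMu G X ⊤ else 0 : ℤ) : ℚ) := by
          refine Finset.sum_congr rfl fun X _ => ?_
          by_cases h : X ≤ N
          · rw [if_neg (by rw [sup_eq_right.mpr h]; exact hNtop), if_neg (not_not_intro h)]
            simp
          · rw [if_pos (hmax X h), if_pos h]
            push_cast
            ring
      _ = ((∑ X : Subgroup G,
            (if ¬ X ≤ N then (Nat.card X : ℤ) * subgroupMu G X ⊤ else 0) : ℤ) : ℚ) := by
          push_cast
          rfl
      _ = 0 := by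
          rw [main_sum hG N hNtop heuler]
          rfl
  rw [mBouc, hS, mul_zero]
end

section
/- Let S_5 be the symmetric group on 5 letters and A_5 its alternating subgroup. For every cyclic subgroup C of A_5, the comparability graph of the poset T_C(S_5) is connected. -/
set_option maxRecDepth 8000000

set_option maxRecDepth 4000000

/-- The comparability graph of a preorder: distinct `X`, `Y` are adjacent iff they are
comparable. -/
def compGraph (α : Type*) [Preorder α] : SimpleGraph α where
  Adj X Y := X ≠ Y ∧ (X ≤ Y ∨ Y ≤ X)
  symm := ⟨fun _ _ h => ⟨h.1.symm, h.2.symm⟩⟩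
  loopless := ⟨fun _ h => h.1 rfl⟩

open Equiv Subgroup

abbrev G5 := Equiv.Perm (Fin 5)

def mkP (f g : Fin 5 → Fin 5) (h1 : ∀ x, g (f x) = x := by decide)
    (h2 : ∀ x, f (g x) = x := by decide) : G5 := ⟨f, g, h1, h2⟩


def p01234 : G5 := mkP ![0, 1, 2, 3, 4] ![0, 1, 2, 3, 4]
def p01243 : G5 := mkP ![0, 1, 2, 4, 3] ![0, 1, 2, 4, 3]
def p01324 : G5 := mkP ![0, 1, 3, 2, 4] ![0, 1, 3, 2, 4]
def p01342 : G5 := mkP ![0, 1, 3, 4, 2] ![0, 1, 4, 2, 3]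
def p01423 : G5 := mkP ![0, 1, 4, 2, 3] ![0, 1, 3, 4, 2]
def p01432 : G5 := mkP ![0, 1, 4, 3, 2] ![0, 1, 4, 3, 2]
def p02134 : G5 := mkP ![0, 2, 1, 3, 4] ![0, 2, 1, 3, 4]
def p02143 : G5 := mkP ![0, 2, 1, 4, 3] ![0, 2, 1, 4, 3]
def p02314 : G5 := mkP ![0, 2, 3, 1, 4] ![0, 3, 1, 2, 4]
def p02341 : G5 := mkP ![0, 2, 3, 4, 1] ![0, 4, 1, 2, 3]
def p02413 : G5 := mkP ![0, 2, 4, 1, 3] ![0, 3, 1, 4, 2]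
def p02431 : G5 := mkP ![0, 2, 4, 3, 1] ![0, 4, 1, 3, 2]
def p03124 : G5 := mkP ![0, 3, 1, 2, 4] ![0, 2, 3, 1, 4]
def p03142 : G5 := mkP ![0, 3, 1, 4, 2] ![0, 2, 4, 1, 3]
def p03214 : G5 := mkP ![0, 3, 2, 1, 4] ![0, 3, 2, 1, 4]
def p03241 : G5 := mkP ![0, 3, 2, 4, 1] ![0, 4, 2, 1, 3]
def p03412 : G5 := mkP ![0, 3, 4, 1, 2] ![0, 3, 4, 1, 2]
def p03421 : G5 := mkP ![0, 3, 4, 2, 1] ![0, 4, 3, 1, 2]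
def p04123 : G5 := mkP ![0, 4, 1, 2, 3] ![0, 2, 3, 4, 1]
def p04132 : G5 := mkP ![0, 4, 1, 3, 2] ![0, 2, 4, 3, 1]
def p04213 : G5 := mkP ![0, 4, 2, 1, 3] ![0, 3, 2, 4, 1]
def p04231 : G5 := mkP ![0, 4, 2, 3, 1] ![0, 4, 2, 3, 1]
def p04312 : G5 := mkP ![0, 4, 3, 1, 2] ![0, 3, 4, 2, 1]
def p04321 : G5 := mkP ![0, 4, 3, 2, 1] ![0, 4, 3, 2, 1]
def p10234 : G5 := mkP ![1, 0, 2, 3, 4] ![1, 0, 2, 3, 4]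
def p10243 : G5 := mkP ![1, 0, 2, 4, 3] ![1, 0, 2, 4, 3]
def p10324 : G5 := mkP ![1, 0, 3, 2, 4] ![1, 0, 3, 2, 4]
def p10342 : G5 := mkP ![1, 0, 3, 4, 2] ![1, 0, 4, 2, 3]
def p10423 : G5 := mkP ![1, 0, 4, 2, 3] ![1, 0, 3, 4, 2]
def p10432 : G5 := mkP ![1, 0, 4, 3, 2] ![1, 0, 4, 3, 2]
def p12034 : G5 := mkP ![1, 2, 0, 3, 4] ![2, 0, 1, 3, 4]
def p12043 : G5 := mkP ![1, 2, 0, 4, 3] ![2, 0, 1, 4, 3]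
def p12304 : G5 := mkP ![1, 2, 3, 0, 4] ![3, 0, 1, 2, 4]
def p12340 : G5 := mkP ![1, 2, 3, 4, 0] ![4, 0, 1, 2, 3]
def p12403 : G5 := mkP ![1, 2, 4, 0, 3] ![3, 0, 1, 4, 2]
def p12430 : G5 := mkP ![1, 2, 4, 3, 0] ![4, 0, 1, 3, 2]
def p13024 : G5 := mkP ![1, 3, 0, 2, 4] ![2, 0, 3, 1, 4]
def p13042 : G5 := mkP ![1, 3, 0, 4, 2] ![2, 0, 4, 1, 3]
def p13204 : G5 := mkP ![1, 3, 2, 0, 4] ![3, 0, 2, 1, 4]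
def p13240 : G5 := mkP ![1, 3, 2, 4, 0] ![4, 0, 2, 1, 3]
def p13402 : G5 := mkP ![1, 3, 4, 0, 2] ![3, 0, 4, 1, 2]
def p13420 : G5 := mkP ![1, 3, 4, 2, 0] ![4, 0, 3, 1, 2]
def p14023 : G5 := mkP ![1, 4, 0, 2, 3] ![2, 0, 3, 4, 1]
def p14032 : G5 := mkP ![1, 4, 0, 3, 2] ![2, 0, 4, 3, 1]
def p14203 : G5 := mkP ![1, 4, 2, 0, 3] ![3, 0, 2, 4, 1]
def p14230 : G5 := mkP ![1, 4, 2, 3, 0] ![4, 0, 2, 3, 1]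
def p14302 : G5 := mkP ![1, 4, 3, 0, 2] ![3, 0, 4, 2, 1]
def p14320 : G5 := mkP ![1, 4, 3, 2, 0] ![4, 0, 3, 2, 1]
def p20134 : G5 := mkP ![2, 0, 1, 3, 4] ![1, 2, 0, 3, 4]
def p20143 : G5 := mkP ![2, 0, 1, 4, 3] ![1, 2, 0, 4, 3]
def p20314 : G5 := mkP ![2, 0, 3, 1, 4] ![1, 3, 0, 2, 4]
def p20341 : G5 := mkP ![2, 0, 3, 4, 1] ![1, 4, 0, 2, 3]
def p20413 : G5 := mkP ![2, 0, 4, 1, 3] ![1, 3, 0, 4, 2]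
def p20431 : G5 := mkP ![2, 0, 4, 3, 1] ![1, 4, 0, 3, 2]
def p21034 : G5 := mkP ![2, 1, 0, 3, 4] ![2, 1, 0, 3, 4]
def p21043 : G5 := mkP ![2, 1, 0, 4, 3] ![2, 1, 0, 4, 3]
def p21304 : G5 := mkP ![2, 1, 3, 0, 4] ![3, 1, 0, 2, 4]
def p21340 : G5 := mkP ![2, 1, 3, 4, 0] ![4, 1, 0, 2, 3]
def p21403 : G5 := mkP ![2, 1, 4, 0, 3] ![3, 1, 0, 4, 2]
def p21430 : G5 := mkP ![2, 1, 4, 3, 0] ![4, 1, 0, 3, 2]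
def p23014 : G5 := mkP ![2, 3, 0, 1, 4] ![2, 3, 0, 1, 4]
def p23041 : G5 := mkP ![2, 3, 0, 4, 1] ![2, 4, 0, 1, 3]
def p23104 : G5 := mkP ![2, 3, 1, 0, 4] ![3, 2, 0, 1, 4]
def p23140 : G5 := mkP ![2, 3, 1, 4, 0] ![4, 2, 0, 1, 3]
def p23401 : G5 := mkP ![2, 3, 4, 0, 1] ![3, 4, 0, 1, 2]
def p23410 : G5 := mkP ![2, 3, 4, 1, 0] ![4, 3, 0, 1, 2]
def p24013 : G5 := mkP ![2, 4, 0, 1, 3] ![2, 3, 0, 4, 1]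
def p24031 : G5 := mkP ![2, 4, 0, 3, 1] ![2, 4, 0, 3, 1]
def p24103 : G5 := mkP ![2, 4, 1, 0, 3] ![3, 2, 0, 4, 1]
def p24130 : G5 := mkP ![2, 4, 1, 3, 0] ![4, 2, 0, 3, 1]
def p24301 : G5 := mkP ![2, 4, 3, 0, 1] ![3, 4, 0, 2, 1]
def p24310 : G5 := mkP ![2, 4, 3, 1, 0] ![4, 3, 0, 2, 1]
def p30124 : G5 := mkP ![3, 0, 1, 2, 4] ![1, 2, 3, 0, 4]
def p30142 : G5 := mkP ![3, 0, 1, 4, 2] ![1, 2, 4, 0, 3]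
def p30214 : G5 := mkP ![3, 0, 2, 1, 4] ![1, 3, 2, 0, 4]
def p30241 : G5 := mkP ![3, 0, 2, 4, 1] ![1, 4, 2, 0, 3]
def p30412 : G5 := mkP ![3, 0, 4, 1, 2] ![1, 3, 4, 0, 2]
def p30421 : G5 := mkP ![3, 0, 4, 2, 1] ![1, 4, 3, 0, 2]
def p31024 : G5 := mkP ![3, 1, 0, 2, 4] ![2, 1, 3, 0, 4]
def p31042 : G5 := mkP ![3, 1, 0, 4, 2] ![2, 1, 4, 0, 3]
def p31204 : G5 := mkP ![3, 1, 2, 0, 4] ![3, 1, 2, 0, 4]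
def p31240 : G5 := mkP ![3, 1, 2, 4, 0] ![4, 1, 2, 0, 3]
def p31402 : G5 := mkP ![3, 1, 4, 0, 2] ![3, 1, 4, 0, 2]
def p31420 : G5 := mkP ![3, 1, 4, 2, 0] ![4, 1, 3, 0, 2]
def p32014 : G5 := mkP ![3, 2, 0, 1, 4] ![2, 3, 1, 0, 4]
def p32041 : G5 := mkP ![3, 2, 0, 4, 1] ![2, 4, 1, 0, 3]
def p32104 : G5 := mkP ![3, 2, 1, 0, 4] ![3, 2, 1, 0, 4]
def p32140 : G5 := mkP ![3, 2, 1, 4, 0] ![4, 2, 1, 0, 3]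
def p32401 : G5 := mkP ![3, 2, 4, 0, 1] ![3, 4, 1, 0, 2]
def p32410 : G5 := mkP ![3, 2, 4, 1, 0] ![4, 3, 1, 0, 2]
def p34012 : G5 := mkP ![3, 4, 0, 1, 2] ![2, 3, 4, 0, 1]
def p34021 : G5 := mkP ![3, 4, 0, 2, 1] ![2, 4, 3, 0, 1]
def p34102 : G5 := mkP ![3, 4, 1, 0, 2] ![3, 2, 4, 0, 1]
def p34120 : G5 := mkP ![3, 4, 1, 2, 0] ![4, 2, 3, 0, 1]
def p34201 : G5 := mkP ![3, 4, 2, 0, 1] ![3, 4, 2, 0, 1]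
def p34210 : G5 := mkP ![3, 4, 2, 1, 0] ![4, 3, 2, 0, 1]
def p40123 : G5 := mkP ![4, 0, 1, 2, 3] ![1, 2, 3, 4, 0]
def p40132 : G5 := mkP ![4, 0, 1, 3, 2] ![1, 2, 4, 3, 0]
def p40213 : G5 := mkP ![4, 0, 2, 1, 3] ![1, 3, 2, 4, 0]
def p40231 : G5 := mkP ![4, 0, 2, 3, 1] ![1, 4, 2, 3, 0]
def p40312 : G5 := mkP ![4, 0, 3, 1, 2] ![1, 3, 4, 2, 0]
def p40321 : G5 := mkP ![4, 0, 3, 2, 1] ![1, 4, 3, 2, 0]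
def p41023 : G5 := mkP ![4, 1, 0, 2, 3] ![2, 1, 3, 4, 0]
def p41032 : G5 := mkP ![4, 1, 0, 3, 2] ![2, 1, 4, 3, 0]
def p41203 : G5 := mkP ![4, 1, 2, 0, 3] ![3, 1, 2, 4, 0]
def p41230 : G5 := mkP ![4, 1, 2, 3, 0] ![4, 1, 2, 3, 0]
def p41302 : G5 := mkP ![4, 1, 3, 0, 2] ![3, 1, 4, 2, 0]
def p41320 : G5 := mkP ![4, 1, 3, 2, 0] ![4, 1, 3, 2, 0]
def p42013 : G5 := mkP ![4, 2, 0, 1, 3] ![2, 3, 1, 4, 0]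
def p42031 : G5 := mkP ![4, 2, 0, 3, 1] ![2, 4, 1, 3, 0]
def p42103 : G5 := mkP ![4, 2, 1, 0, 3] ![3, 2, 1, 4, 0]
def p42130 : G5 := mkP ![4, 2, 1, 3, 0] ![4, 2, 1, 3, 0]
def p42301 : G5 := mkP ![4, 2, 3, 0, 1] ![3, 4, 1, 2, 0]
def p42310 : G5 := mkP ![4, 2, 3, 1, 0] ![4, 3, 1, 2, 0]
def p43012 : G5 := mkP ![4, 3, 0, 1, 2] ![2, 3, 4, 1, 0]
def p43021 : G5 := mkP ![4, 3, 0, 2, 1] ![2, 4, 3, 1, 0]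
def p43102 : G5 := mkP ![4, 3, 1, 0, 2] ![3, 2, 4, 1, 0]
def p43120 : G5 := mkP ![4, 3, 1, 2, 0] ![4, 2, 3, 1, 0]
def p43201 : G5 := mkP ![4, 3, 2, 0, 1] ![3, 4, 2, 1, 0]
def p43210 : G5 := mkP ![4, 3, 2, 1, 0] ![4, 3, 2, 1, 0]

def F20r0l : List G5 := [p01234, p02413, p03142, p04321, p10432, p12340, p13024, p14203, p20314, p21043, p23401, p24130, p30241, p31420, p32104, p34012, p40123, p41302, p42031, p43210]
def F20al : List G5 := [p01234, p02143, p03421, p04312, p10324, p12430, p13042, p14203, p20413, p21340, p23104, p24031, p30241, p31402, p32014, p34120, p40132, p41023, p42301, p43210]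
def F20bl : List G5 := [p01234, p02341, p03412, p04123, p10324, p12403, p13240, p14032, p20431, p21043, p23104, p24310, p30142, p31420, p32014, p34201, p40213, p41302, p42130, p43021]

def wEval (c t : G5) (w : List Bool) : G5 := (w.map (fun b => if b then c else t)).prod

def certL3 : List (G5 × List Bool × List Bool) := [(p02341, [false,false,true,false,false,true], [true,false,true,false,true,false]),
  (p02413, [true,true,false,true,false], [true,false,true,false,true,false]),
  (p03142, [false,false,true,true,false,false,true], [false,false,true,false,false,true,false]),
  (p03421, [false,true,false,false,false,true], [false,true,false,true,false,true,true,false,true,true,false]),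
  (p04123, [false,false,true,false,false,true], [false,false,true,false,false,true,false]),
  (p04312, [false,false,false,true,false,true], [false,true,false,true,false,true,true,false,true,true,false]),
  (p10342, [true,false,false,false,false], [false,false,false]),
  (p10423, [true,false,false], [false,false,false]),
  (p13240, [true,false,false,true,false,false], [false,true,false,true,false]),
  (p13402, [false,true,true,false,false,true,false,true], [true,false,true,false,true,false,false,false]),
  (p14203, [false,true,false,true,true], [false,true,false,true,false]),
  (p14320, [false,true,true,false,false,false,true], [true,false,true,false,true,false,false,false]),
  (p21340, [false,false,true,false,false,true,false,false], [false,true,false,false,true,false,false]),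
  (p21403, [false,true,true,false], [false,true,false,false,true,false,false]),
  (p23041, [true,true,false,true,false,false,false], [false,false,false,true]),
  (p23410, [false,true,false,false,false,true], [false,false,false,true,true,false,true,true,false]),
  (p24013, [true,true,false,false,true,true], [false,false,false,true]),
  (p24301, [true,false,false,false,true,false], [false,false,false,true,true,false,true,true,false]),
  (p30241, [true,false,false,true,true,false,false], [false,true,true,false,true,true,false]),
  (p30412, [false,false,false,true,false,true], [true,false,false,false,true,true,false,true,true,false]),
  (p31042, [true,false,false,true,false,true,false], [false,true,false,true,false,true]),
  (p31420, [false,false,true,false,true,false,true,true], [false,true,true,false,true,true,false,true,false,true,false]),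
  (p32140, [false,false,false,false,true], [true,false,false,false]),
  (p32401, [true,false,true,false,false,true,true,false], [false,false,false,true,false,true,false]),
  (p34021, [false,true,false,true,true,false,false], [false,true,false,true,false,false,false]),
  (p34102, [true,false,true,false,false,false], [false,true,true,false,true,true,false,false,false]),
  (p34210, [true,false,true,false,false,false], [true,false,true,true,false,true,true,false,true,false,true,false]),
  (p40213, [true,false,false,true,false,false], [false,true,true,false,true,true,false]),
  (p40321, [false,true,true,false,false,true,false,true], [true,false,false,false,true,true,false,true,true,false]),
  (p41023, [true,false,true,false,true], [false,true,false,true,false,true]),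
  (p41302, [true,true,false,true,false,true,false,false], [false,true,true,false,true,true,false,true,false,true,false]),
  (p42103, [false,false,true], [true,false,false,false]),
  (p42310, [true,false,false,false,true,true,false], [false,false,false,true,false,true,false]),
  (p43012, [true,false,true,true,false,false,false], [false,true,false,true,false,false,false]),
  (p43120, [true,true,false,false,true,false,true,false], [false,true,true,false,true,true,false,false,false]),
  (p43201, [true,false,false,false,true,false], [true,false,true,true,false,true,true,false,true,false,true,false])]
def certL22 : List (G5 × List Bool × List Bool) := [(p02413, [false,false,true,false,true,false,false,false,true], [false,true,false,false,false,true,false,true,false,false,false,true,false]),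
  (p03142, [true,false,false,true,false,true,false,true], [false,true,false,false,false,true,false,true,false,false,false,true,false]),
  (p12043, [false,true,false,false,false,true], [true,false,false,false,true,false,false,false,true,false,false,false]),
  (p13402, [false,true,false,true,false,false,false,false], [true,false,false,false,true,false,false,false,true,false,false,false]),
  (p20143, [true,false,true,false,false,false,true,false,false], [true,false,false,false,true,false,false,false,true,false,false,false]),
  (p21403, [false,false,true,false,true,false], [false,true,false,false,false,true,false,true,false,false,false,true,false]),
  (p23041, [true,false,false,false,false], [false,true,false,false,true,false,false]),
  (p23410, [false,false,false,false,true], [false,true,false,false,true,false,false]),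
  (p24013, [true,false,false], [false,false,true,false,false,true,false]),
  (p24130, [true,false,true,false,true,false,false,true], [true,false,true,false,false,false,true,false,true,false,false,false,true,false]),
  (p24301, [false,false,false,false,true,false,true,false], [false,false,false,true,false,false,false,true,false,false,false]),
  (p30412, [true,false,true,false,false,false], [true,false,false,false,true,false,false,false,true,false,false,false]),
  (p31042, [true,false,false,true,false,true,false,false,false], [false,true,false,false,false,true,false,true,false,false,false,true,false]),
  (p32140, [false,true,false,true,false,true,false], [false,true,false,false,true,false,false]),
  (p32401, [true,false,true,false,true,false,true,false,true], [false,true,false,false,true,false,false]),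
  (p34021, [false,false,false,true,false,true], [false,false,false,true,false,false,false,true,false,false,false]),
  (p34102, [false,true,false], [false,false,true,false,false,true,false]),
  (p34210, [false,true,false,false,true,false,true,false,false], [true,false,true,false,false,false,true,false,true,false,false,false,true,false]),
  (p42031, [true,false,false,false,true,false,true,false,false], [true,false,true,false,false,false,true,false,true,false,false,false,true,false]),
  (p42103, [true,false,true,false,true], [false,false,true,false,false,true,false]),
  (p42310, [true,false,false,false,true,false], [false,false,false,true,false,false,false,true,false,false,false]),
  (p43012, [false,false,true], [false,false,true,false,false,true,false]),
  (p43120, [false,true,false,true,false,false,false,true,false], [false,false,false,true,false,false,false,true,false,false,false]),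
  (p43201, [false,true,false,true,false,false], [true,false,true,false,false,false,true,false,true,false,false,false,true,false])]

def conjTab : List (G5 × G5) := [(p01234, p01234),
  (p01342, p34012),
  (p01423, p34021),
  (p02143, p40123),
  (p02314, p30124),
  (p02431, p30142),
  (p03124, p30214),
  (p03241, p30412),
  (p03412, p40213),
  (p04132, p30241),
  (p04213, p30421),
  (p04321, p40231),
  (p10243, p01423),
  (p10324, p01234),
  (p10432, p01243),
  (p12034, p01234),
  (p12340, p01234),
  (p12403, p01243),
  (p13042, p01423),
  (p13204, p01324),
  (p13420, p01324),
  (p14023, p01432),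
  (p14230, p01342),
  (p14302, p01342),
  (p20134, p02134),
  (p20341, p04123),
  (p20413, p04132),
  (p21043, p04123),
  (p21304, p03124),
  (p21430, p03142),
  (p23014, p02134),
  (p23140, p02134),
  (p23401, p03142),
  (p24031, p02143),
  (p24103, p02143),
  (p24310, p03124),
  (p30142, p04312),
  (p30214, p02314),
  (p30421, p04213),
  (p31024, p03214),
  (p31240, p03412),
  (p31402, p04213),
  (p32041, p03412),
  (p32104, p02314),
  (p32410, p02314),
  (p34012, p02413),
  (p34120, p03214),
  (p34201, p02413),
  (p40123, p04321),
  (p40231, p02341),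
  (p40312, p04231),
  (p41032, p03241),
  (p41203, p03421),
  (p41320, p04231),
  (p42013, p03421),
  (p42130, p02341),
  (p42301, p02341),
  (p43021, p02431),
  (p43102, p03241),
  (p43210, p02431)]




open Equiv Subgroup

abbrev TT (c : G5) : Set (Subgroup G5) :=
  TCposet G5 (alternatingGroup (Fin 5)) (zpowers c)

def KK (c t : G5) : Subgroup G5 := zpowers c ⊔ zpowers t

lemma c_mem_KK {c t : G5} : c ∈ KK c t := mem_sup_left (mem_zpowers c)
lemma t_mem_KK {c t : G5} : t ∈ KK c t := mem_sup_right (mem_zpowers t)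
lemma KK_le {c t : G5} {X : Subgroup G5} (hc : c ∈ X) (ht : t ∈ X) : KK c t ≤ X :=
  sup_le (zpowers_le.2 hc) (zpowers_le.2 ht)

lemma ne_top_of_not_mem {X : Subgroup G5} {x : G5} (h : x ∉ X) : X ≠ ⊤ :=
  fun ht => h (ht.symm ▸ mem_top x)

lemma ne_top_of_le' {X Y : Subgroup G5} (hY : Y ≠ ⊤) (h : X ≤ Y) : X ≠ ⊤ :=
  fun ht => hY (top_le_iff.1 (ht ▸ h))

lemma mem_TT {c : G5} {X : Subgroup G5} (hc : c ∈ X) {t : G5} (ht : t ∈ X)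
    (hts : Perm.sign t = -1) (hX : X ≠ ⊤) : X ∈ TT c := by
  refine ⟨zpowers_le.2 hc, lt_top_iff_ne_top.2 hX, fun hA => ?_⟩
  have := Perm.mem_alternatingGroup.mp (hA ht)
  rw [this] at hts
  exact absurd hts (by decide)

lemma exists_odd {c : G5} {X : Subgroup G5} (hX : X ∈ TT c) :
    ∃ t ∈ X, Perm.sign t = -1 := by
  obtain ⟨t, htX, htA⟩ := SetLike.not_le_iff_exists.1 hX.2.2
  rcases Int.units_eq_one_or (Perm.sign t) with h | h
  · exact absurd (Perm.mem_alternatingGroup.mpr h) htA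
  · exact ⟨t, htX, h⟩

lemma reach_le {S : Set (Subgroup G5)} {A B : S} (h : (A : Subgroup G5) ≤ B) :
    (compGraph S).Reachable A B := by
  rcases eq_or_ne A B with rfl | hne
  · exact SimpleGraph.Reachable.refl _
  · exact SimpleGraph.Adj.reachable ⟨hne, Or.inl h⟩

lemma reach_via {S : Set (Subgroup G5)} {X K M H : S} (h1 : (K : Subgroup G5) ≤ X)
    (h2 : (K : Subgroup G5) ≤ M) (h3 : (H : Subgroup G5) ≤ M) :
    (compGraph S).Reachable X H :=
  ((reach_le h1).symm.trans (reach_le h2)).trans (reach_le h3).symm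

lemma reach_via2 {S : Set (Subgroup G5)} {X K M K2 M2 H : S} (h1 : (K : Subgroup G5) ≤ X)
    (h2 : (K : Subgroup G5) ≤ M) (h3 : (K2 : Subgroup G5) ≤ M)
    (h4 : (K2 : Subgroup G5) ≤ M2) (h5 : (H : Subgroup G5) ≤ M2) :
    (compGraph S).Reachable X H :=
  ((reach_le h1).symm.trans (reach_le h2)).trans
    (((reach_le h3).symm.trans (reach_le h4)).trans (reach_le h5).symm)

lemma conn_of_hub {S : Set (Subgroup G5)} (hub : S)
    (h : ∀ X : S, (compGraph S).Reachable X hub) : (compGraph S).Connected := by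
  rw [SimpleGraph.connected_iff]
  exact ⟨fun u v => (h u).trans (h v).symm, ⟨hub⟩⟩

def listSG (l : List G5) (h1 : (1 : G5) ∈ l) (hm : ∀ a ∈ l, ∀ b ∈ l, a * b ∈ l)
    (hi : ∀ a ∈ l, a⁻¹ ∈ l) : Subgroup G5 where
  carrier := {x | x ∈ l}
  one_mem' := h1
  mul_mem' := fun ha hb => hm _ ha _ hb
  inv_mem' := fun ha => hi _ ha

def SPair (a b : Fin 5) : Subgroup G5 where
  carrier := {σ | (σ a = a ∧ σ b = b) ∨ (σ a = b ∧ σ b = a)}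
  one_mem' := Or.inl ⟨rfl, rfl⟩
  mul_mem' := by
    rintro σ τ (⟨h1, h2⟩ | ⟨h1, h2⟩) (⟨g1, g2⟩ | ⟨g1, g2⟩) <;>
      simp only [Set.mem_setOf_eq, Perm.mul_apply, g1, g2, h1, h2] <;> tauto
  inv_mem' := by
    rintro σ (⟨h1, h2⟩ | ⟨h1, h2⟩)
    · exact Or.inl ⟨σ.injective (by simp [h1]), σ.injective (by simp [h2])⟩
    · exact Or.inr ⟨σ.injective (by simp [h2]), σ.injective (by simp [h1])⟩

lemma mem_SPair {σ : G5} {a b : Fin 5} :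
    σ ∈ SPair a b ↔ (σ a = a ∧ σ b = b) ∨ (σ a = b ∧ σ b = a) := Iff.rfl

def stP (p : Fin 5) : Subgroup G5 := MulAction.stabilizer G5 p

lemma mem_stP {σ : G5} {p : Fin 5} : σ ∈ stP p ↔ σ p = p := by
  rw [stP, MulAction.mem_stabilizer_iff, Equiv.Perm.smul_def]

lemma stP_ne_top (p : Fin 5) : stP p ≠ ⊤ := by
  obtain ⟨q, hq⟩ := exists_ne p
  exact ne_top_of_not_mem (x := Equiv.swap p q)
    (fun h => hq (by simpa [Equiv.swap_apply_left] using mem_stP.1 h))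

lemma SPair_ne_top {a b : Fin 5} : SPair a b ≠ ⊤ := by
  have h : ∀ a b : Fin 5, ∃ m, m ≠ a ∧ m ≠ b ∧ m ≠ 0 ∧ m ≠ 1 := by decide
  obtain ⟨m, hma, hmb, -, -⟩ := h a b
  refine ne_top_of_not_mem (x := Equiv.swap a m) (fun h => ?_)
  rcases mem_SPair.1 h with ⟨h1, -⟩ | ⟨h1, -⟩ <;>
    rw [Equiv.swap_apply_left] at h1 <;> [exact hma h1; exact hmb h1]

def swapCheck (σ : G5) : Prop := ∃ a, σ a ≠ a ∧ σ = Equiv.swap a (σ a)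

instance : DecidablePred swapCheck := fun σ => by unfold swapCheck; infer_instance

lemma isSwap_of_swapCheck {σ : G5} (h : swapCheck σ) : σ.IsSwap :=
  let ⟨a, h1, h2⟩ := h; ⟨a, σ a, Ne.symm h1, h2⟩

lemma pr0_eq : p12340 = finRotate 5 := by decide

lemma sw01_eq : p10234 = Equiv.swap 0 1 := by decide

lemma top_of_swap {X : Subgroup G5} (hr : finRotate 5 ∈ X) {τ : G5} (ht : τ ∈ X)
    (hsw : τ.IsSwap) : X = ⊤ := by
  rw [eq_top_iff,
    ← Equiv.Perm.closure_prime_cycle_swap (σ := finRotate 5) (τ := τ)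
      (by simp [Fintype.card_fin]; norm_num) isCycle_finRotate support_finRotate hsw]
  refine (Subgroup.closure_le X).2 ?_
  rintro x (rfl | rfl)
  · exact hr
  · exact ht

lemma wEval_mem {X : Subgroup G5} {c t : G5} (hc : c ∈ X) (ht : t ∈ X) (w : List Bool) :
    wEval c t w ∈ X := by
  induction w with
  | nil => simpa [wEval] using X.one_mem
  | cons b w ih =>
      rw [wEval, List.map_cons, List.prod_cons]
      exact X.mul_mem (by cases b <;> simp [hc, ht]) ih

def certOK (c t : G5) (L : List (G5 × List Bool × List Bool)) : Prop :=
  ∃ e ∈ L, e.1 = t ∧ wEval c t e.2.1 = p12340 ∧ wEval c t e.2.2 = p10234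

instance (c t : G5) (L : List (G5 × List Bool × List Bool)) : Decidable (certOK c t L) := by
  unfold certOK; infer_instance

lemma top_of_cert {X : Subgroup G5} {c t : G5} {L : List (G5 × List Bool × List Bool)}
    (hc : c ∈ X) (ht : t ∈ X) (h : certOK c t L) : X = ⊤ := by
  obtain ⟨e, -, -, h1, h2⟩ := h
  have hr : finRotate 5 ∈ X := pr0_eq ▸ h1 ▸ wEval_mem hc ht _
  have hs : p10234 ∈ X := h2 ▸ wEval_mem hc ht _
  exact top_of_swap hr hs ⟨0, 1, by decide, sw01_eq⟩


open Equiv Subgroup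

lemma genR0 : ∀ y : G5, Perm.sign y = -1 → y ∉ F20r0l →
    ∃ i j : Fin 5, swapCheck (p12340 ^ (i : ℕ) * y * p12340 ^ (j : ℕ)) := by decide


open Equiv Subgroup

def sp (t : G5) (a b : Fin 5) : Prop := (t a = a ∧ t b = b) ∨ (t a = b ∧ t b = a)
instance : ∀ t a b, Decidable (sp t a b) := fun t a b => by unfold sp; infer_instance

lemma case3 : ∀ t : G5, Perm.sign t = -1 →
    t 3 = 3 ∨ t 4 = 4 ∨ (t 3 = 4 ∧ t 4 = 3) ∨ certOK p12034 t certL3 := by decide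

lemma case22 : ∀ t : G5, Perm.sign t = -1 →
    t 4 = 4 ∨ sp t 0 1 ∨ sp t 2 3 ∨ t ∈ F20al ∨ t ∈ F20bl ∨ certOK p10324 t certL22 := by decide

lemma case1 : ∀ t : G5, Perm.sign t = -1 →
    (∃ p, t p = p) ∨ (∃ a b, a ≠ b ∧ t a = b ∧ t b = a) := by decide

lemma conjd : ∀ c : G5, Perm.sign c = 1 → ∃ e ∈ conjTab, e.1 = c ∧
    (e.2 * c * e.2⁻¹ = 1 ∨ e.2 * c * e.2⁻¹ = p10324 ∨ e.2 * c * e.2⁻¹ = p12034 ∨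
      e.2 * c * e.2⁻¹ = p12340) := by decide


open Equiv Subgroup

def F20r0 : Subgroup G5 := listSG F20r0l (by decide) (by decide) (by decide)
def F20a : Subgroup G5 := listSG F20al (by decide) (by decide) (by decide)
def F20b : Subgroup G5 := listSG F20bl (by decide) (by decide) (by decide)


open Equiv Subgroup

lemma mem_F20r0 {x : G5} (h : x ∈ F20r0l) : x ∈ F20r0 := h
lemma ne_top_F20r0 : F20r0 ≠ ⊤ :=
  ne_top_of_not_mem (x := p10234) (fun h => absurd (show p10234 ∈ F20r0l by exact h) (by decide))
lemma ne_top_F20a : F20a ≠ ⊤ :=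
  ne_top_of_not_mem (x := p10234) (fun h => absurd (show p10234 ∈ F20al by exact h) (by decide))
lemma ne_top_F20b : F20b ≠ ⊤ :=
  ne_top_of_not_mem (x := p10234) (fun h => absurd (show p10234 ∈ F20bl by exact h) (by decide))
lemma mem_F20a {x : G5} (h : x ∈ F20al) : x ∈ F20a := h
lemma mem_F20b {x : G5} (h : x ∈ F20bl) : x ∈ F20b := h

lemma conn_3 : (compGraph ↥(TT p12034)).Connected := by
  have hc3 : p12034 ∈ stP 3 := mem_stP.2 (by decide)
  have hc4 : p12034 ∈ stP 4 := mem_stP.2 (by decide)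
  have hsw3 : p10234 ∈ stP 3 := mem_stP.2 (by decide)
  have hsw4 : p10234 ∈ stP 4 := mem_stP.2 (by decide)
  have hHle3 : KK p12034 p10234 ≤ stP 3 := KK_le hc3 hsw3
  have hHmem : KK p12034 p10234 ∈ TT p12034 :=
    mem_TT c_mem_KK t_mem_KK (by decide) (ne_top_of_le' (stP_ne_top 3) hHle3)
  refine conn_of_hub ⟨_, hHmem⟩ ?_
  rintro ⟨X, hX⟩
  obtain ⟨t, htX, hts⟩ := exists_odd hX
  have hcX : p12034 ∈ X := hX.1 (mem_zpowers _)
  have hXne : X ≠ ⊤ := hX.2.1.ne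
  have hKle : KK p12034 t ≤ X := KK_le hcX htX
  have hKmem : KK p12034 t ∈ TT p12034 :=
    mem_TT c_mem_KK t_mem_KK hts (ne_top_of_le' hXne hKle)
  rcases case3 t hts with h | h | h | h
  · have hM : stP 3 ∈ TT p12034 := mem_TT hc3 hsw3 (by decide) (stP_ne_top 3)
    exact reach_via (K := ⟨_, hKmem⟩) (M := ⟨_, hM⟩) hKle (KK_le hc3 (mem_stP.2 h)) hHle3
  · have hM : stP 4 ∈ TT p12034 := mem_TT hc4 hsw4 (by decide) (stP_ne_top 4)
    exact reach_via (K := ⟨_, hKmem⟩) (M := ⟨_, hM⟩) hKle (KK_le hc4 (mem_stP.2 h))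
      (KK_le hc4 hsw4)
  · have hcM : p12034 ∈ SPair 3 4 := mem_SPair.2 (Or.inl (by decide))
    have hswM : p10234 ∈ SPair 3 4 := mem_SPair.2 (Or.inl (by decide))
    have hM : SPair 3 4 ∈ TT p12034 := mem_TT hcM hswM (by decide) SPair_ne_top
    exact reach_via (K := ⟨_, hKmem⟩) (M := ⟨_, hM⟩) hKle
      (KK_le hcM (mem_SPair.2 (Or.inr h))) (KK_le hcM hswM)
  · exact absurd (top_of_cert hcX htX h) hXne

lemma conn_22 : (compGraph ↥(TT p10324)).Connected := by
  have hc4 : p10324 ∈ stP 4 := mem_stP.2 (by decide)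
  have hsw4 : p10234 ∈ stP 4 := mem_stP.2 (by decide)
  have hHle4 : KK p10324 p10234 ≤ stP 4 := KK_le hc4 hsw4
  have hHmem : KK p10324 p10234 ∈ TT p10324 :=
    mem_TT c_mem_KK t_mem_KK (by decide) (ne_top_of_le' (stP_ne_top 4) hHle4)
  have hM4 : stP 4 ∈ TT p10324 := mem_TT hc4 hsw4 (by decide) (stP_ne_top 4)
  refine conn_of_hub ⟨_, hHmem⟩ ?_
  rintro ⟨X, hX⟩
  obtain ⟨t, htX, hts⟩ := exists_odd hX
  have hcX : p10324 ∈ X := hX.1 (mem_zpowers _)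
  have hXne : X ≠ ⊤ := hX.2.1.ne
  have hKle : KK p10324 t ≤ X := KK_le hcX htX
  have hKmem : KK p10324 t ∈ TT p10324 :=
    mem_TT c_mem_KK t_mem_KK hts (ne_top_of_le' hXne hKle)
  have hK2le4 : KK p10324 p32014 ≤ stP 4 :=
    KK_le (mem_stP.2 (by decide)) (mem_stP.2 (by decide))
  have hK2 : KK p10324 p32014 ∈ TT p10324 :=
    mem_TT c_mem_KK t_mem_KK (by decide) (ne_top_of_le' (stP_ne_top 4) hK2le4)
  rcases case22 t hts with h | h | h | h | h | h
  · exact reach_via (K := ⟨_, hKmem⟩) (M := ⟨_, hM4⟩) hKle (KK_le hc4 (mem_stP.2 h)) hHle4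
  · have hcM : p10324 ∈ SPair 0 1 := mem_SPair.2 (Or.inr (by decide))
    have hswM : p10234 ∈ SPair 0 1 := mem_SPair.2 (Or.inr (by decide))
    have hM : SPair 0 1 ∈ TT p10324 := mem_TT hcM hswM (by decide) SPair_ne_top
    exact reach_via (K := ⟨_, hKmem⟩) (M := ⟨_, hM⟩) hKle (KK_le hcM h) (KK_le hcM hswM)
  · have hcM : p10324 ∈ SPair 2 3 := mem_SPair.2 (Or.inr (by decide))
    have hswM : p10234 ∈ SPair 2 3 := mem_SPair.2 (Or.inl (by decide))
    have hM : SPair 2 3 ∈ TT p10324 := mem_TT hcM hswM (by decide) SPair_ne_top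
    exact reach_via (K := ⟨_, hKmem⟩) (M := ⟨_, hM⟩) hKle (KK_le hcM h) (KK_le hcM hswM)
  · have hcF : p10324 ∈ F20a := mem_F20a (by decide)
    have htkF : p32014 ∈ F20a := mem_F20a (by decide)
    have hF : F20a ∈ TT p10324 :=
      mem_TT hcF htkF (by decide) ne_top_F20a
    exact reach_via2 (K := ⟨_, hKmem⟩) (M := ⟨_, hF⟩) (K2 := ⟨_, hK2⟩) (M2 := ⟨_, hM4⟩)
      hKle (KK_le hcF (mem_F20a h)) (KK_le hcF htkF) hK2le4 hHle4
  · have hcF : p10324 ∈ F20b := mem_F20b (by decide)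
    have htkF : p32014 ∈ F20b := mem_F20b (by decide)
    have hF : F20b ∈ TT p10324 :=
      mem_TT hcF htkF (by decide) ne_top_F20b
    exact reach_via2 (K := ⟨_, hKmem⟩) (M := ⟨_, hF⟩) (K2 := ⟨_, hK2⟩) (M2 := ⟨_, hM4⟩)
      hKle (KK_le hcF (mem_F20b h)) (KK_le hcF htkF) hK2le4 hHle4
  · exact absurd (top_of_cert hcX htX h) hXne

lemma X_le_F20r0 {X : Subgroup G5} (hX : X ∈ TT p12340) : X ≤ F20r0 := by
  obtain ⟨t, htX, hts⟩ := exists_odd hX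
  have hcX : p12340 ∈ X := hX.1 (mem_zpowers _)
  have hXne : X ≠ ⊤ := hX.2.1.ne
  have key : ∀ y ∈ X, Perm.sign y = -1 → y ∈ F20r0l := by
    intro y hyX hys
    by_contra hyF
    obtain ⟨i, j, hsw⟩ := genR0 y hys hyF
    have hmem : p12340 ^ (i : ℕ) * y * p12340 ^ (j : ℕ) ∈ X :=
      X.mul_mem (X.mul_mem (X.pow_mem hcX _) hyX) (X.pow_mem hcX _)
    exact hXne (top_of_swap (pr0_eq ▸ hcX) hmem (isSwap_of_swapCheck hsw))
  have htF : t ∈ F20r0l := key t htX hts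
  intro x hxX
  rcases Int.units_eq_one_or (Perm.sign x) with hxs | hxs
  · have hxt : x * t ∈ F20r0l :=
      key _ (X.mul_mem hxX htX) (by rw [Equiv.Perm.sign_mul, hxs, hts, one_mul])
    have hmem : (x * t) * t⁻¹ ∈ F20r0 :=
      F20r0.mul_mem (show x * t ∈ F20r0 from hxt) (F20r0.inv_mem (show t ∈ F20r0 from htF))
    simpa [mul_assoc] using hmem
  · exact key x hxX hxs

lemma conn_r0 : (compGraph ↥(TT p12340)).Connected := by
  have hF : F20r0 ∈ TT p12340 :=
    mem_TT (mem_F20r0 (by decide)) (t := p02413) (mem_F20r0 (by decide))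
      (by decide) ne_top_F20r0
  refine conn_of_hub ⟨_, hF⟩ ?_
  rintro ⟨X, hX⟩
  exact reach_le (X_le_F20r0 hX)

lemma conn_1 : (compGraph ↥(TT 1)).Connected := by
  have hHle : KK 1 p10234 ≤ stP 4 := KK_le (stP 4).one_mem (mem_stP.2 (by decide))
  have hHmem : KK 1 p10234 ∈ TT 1 :=
    mem_TT c_mem_KK t_mem_KK (by decide) (ne_top_of_le' (stP_ne_top 4) hHle)
  have hM4 : stP 4 ∈ TT 1 :=
    mem_TT (stP 4).one_mem (mem_stP.2 (by decide : p10234 4 = 4)) (by decide) (stP_ne_top 4)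
  refine conn_of_hub ⟨_, hHmem⟩ ?_
  rintro ⟨X, hX⟩
  obtain ⟨t, htX, hts⟩ := exists_odd hX
  have hXne : X ≠ ⊤ := hX.2.1.ne
  have hKle : KK 1 t ≤ X := KK_le X.one_mem htX
  have hKmem : KK 1 t ∈ TT 1 := mem_TT c_mem_KK t_mem_KK hts (ne_top_of_le' hXne hKle)
  rcases case1 t hts with ⟨p, hp⟩ | ⟨a, b, hab, ha, hb⟩
  · have hMp : stP p ∈ TT 1 := mem_TT (stP p).one_mem (mem_stP.2 hp) hts (stP_ne_top p)
    have hchoice : ∀ q : Fin 5, q = 0 ∨ q = 1 ∨ p10234 q = q := by decide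
    have hbridge : ∀ q : Fin 5, q = 0 ∨ q = 1 → p01324 q = q := by decide
    rcases hchoice p with h01 | h01 | hfix
    · have h23p : p01324 ∈ stP p := mem_stP.2 (hbridge p (Or.inl h01))
      have h23_4 : p01324 ∈ stP 4 := mem_stP.2 (by decide)
      have hK2le : KK 1 p01324 ≤ stP 4 := KK_le (stP 4).one_mem h23_4
      have hK2 : KK 1 p01324 ∈ TT 1 :=
        mem_TT c_mem_KK t_mem_KK (by decide) (ne_top_of_le' (stP_ne_top 4) hK2le)
      exact reach_via2 (K := ⟨_, hKmem⟩) (M := ⟨_, hMp⟩) (K2 := ⟨_, hK2⟩) (M2 := ⟨_, hM4⟩)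
        hKle (KK_le (stP p).one_mem (mem_stP.2 hp)) (KK_le (stP p).one_mem h23p) hK2le hHle
    · have h23p : p01324 ∈ stP p := mem_stP.2 (hbridge p (Or.inr h01))
      have h23_4 : p01324 ∈ stP 4 := mem_stP.2 (by decide)
      have hK2le : KK 1 p01324 ≤ stP 4 := KK_le (stP 4).one_mem h23_4
      have hK2 : KK 1 p01324 ∈ TT 1 :=
        mem_TT c_mem_KK t_mem_KK (by decide) (ne_top_of_le' (stP_ne_top 4) hK2le)
      exact reach_via2 (K := ⟨_, hKmem⟩) (M := ⟨_, hMp⟩) (K2 := ⟨_, hK2⟩) (M2 := ⟨_, hM4⟩)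
        hKle (KK_le (stP p).one_mem (mem_stP.2 hp)) (KK_le (stP p).one_mem h23p) hK2le hHle
    · exact reach_via (K := ⟨_, hKmem⟩) (M := ⟨_, hMp⟩) hKle
        (KK_le (stP p).one_mem (mem_stP.2 hp)) (KK_le (stP p).one_mem (mem_stP.2 hfix))
  · have hτ : Equiv.swap a b ∈ SPair a b :=
      mem_SPair.2 (Or.inr ⟨Equiv.swap_apply_left a b, Equiv.swap_apply_right a b⟩)
    have htP : t ∈ SPair a b := mem_SPair.2 (Or.inr ⟨ha, hb⟩)
    have hMP : SPair a b ∈ TT 1 := mem_TT (SPair a b).one_mem htP hts SPair_ne_top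
    obtain ⟨m, hma, hmb, hm0, hm1⟩ :=
      (by decide : ∀ a b : Fin 5, ∃ m, m ≠ a ∧ m ≠ b ∧ m ≠ 0 ∧ m ≠ 1) a b
    have hτm : Equiv.swap a b ∈ stP m := mem_stP.2 (Equiv.swap_apply_of_ne_of_ne hma hmb)
    have hswm : p10234 ∈ stP m :=
      mem_stP.2 (by rw [sw01_eq]; exact Equiv.swap_apply_of_ne_of_ne hm0 hm1)
    have hMm : stP m ∈ TT 1 := mem_TT (stP m).one_mem hswm (by decide) (stP_ne_top m)
    have hK2le : KK 1 (Equiv.swap a b) ≤ stP m := KK_le (stP m).one_mem hτm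
    have hK2 : KK 1 (Equiv.swap a b) ∈ TT 1 :=
      mem_TT c_mem_KK t_mem_KK (Equiv.Perm.sign_swap hab) (ne_top_of_le' (stP_ne_top m) hK2le)
    exact reach_via2 (K := ⟨_, hKmem⟩) (M := ⟨_, hMP⟩) (K2 := ⟨_, hK2⟩) (M2 := ⟨_, hMm⟩)
      hKle (KK_le (SPair a b).one_mem htP) (KK_le (SPair a b).one_mem hτ) hK2le
      (KK_le (stP m).one_mem hswm)


open Equiv Subgroup

lemma map_A5 (g : G5) :
    (alternatingGroup (Fin 5)).map (MulAut.conj g).toMonoidHom = alternatingGroup (Fin 5) := by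
  ext x
  simp only [Subgroup.mem_map, Perm.mem_alternatingGroup]
  constructor
  · rintro ⟨y, hy, rfl⟩
    show Perm.sign (g * y * g⁻¹) = 1
    rw [Equiv.Perm.sign_mul, Equiv.Perm.sign_mul, hy, Equiv.Perm.sign_inv, mul_one,
      Int.units_mul_self]
  · intro hx
    refine ⟨g⁻¹ * x * g, ?_, ?_⟩
    · rw [Equiv.Perm.sign_mul, Equiv.Perm.sign_mul, Equiv.Perm.sign_inv, hx, mul_one,
        mul_comm, Int.units_mul_self]
    · show g * (g⁻¹ * x * g) * g⁻¹ = x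
      group

lemma conn_transfer (g c : G5)
    (h : (compGraph ↥(TT (g * c * g⁻¹))).Connected) :
    (compGraph ↥(TT c)).Connected := by
  let φ : G5 ≃* G5 := MulAut.conj g
  let e : Subgroup G5 ≃o Subgroup G5 := MulEquiv.mapSubgroup φ
  have hz : e (zpowers c) = zpowers (g * c * g⁻¹) := by
    show Subgroup.map _ (zpowers c) = _
    rw [MonoidHom.map_zpowers]
    rfl
  have htop : e ⊤ = ⊤ := by
    rw [eq_top_iff]
    intro x _
    exact ⟨φ.symm x, mem_top _, φ.apply_symm_apply x⟩
  have hA : e (alternatingGroup (Fin 5)) = alternatingGroup (Fin 5) := by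
    show Subgroup.map _ _ = _
    rw [show ((φ : G5 →* G5) : G5 →* G5) = (MulAut.conj g).toMonoidHom from rfl]
    exact map_A5 g
  have hmem : ∀ X : Subgroup G5, X ∈ TT c ↔ e X ∈ TT (g * c * g⁻¹) := by
    intro X
    constructor
    · rintro ⟨h1, h2, h3⟩
      refine ⟨?_, ?_, ?_⟩
      · rw [← hz]; exact e.monotone h1
      · rw [← htop]; exact e.strictMono h2
      · rw [← hA]; exact fun hle => h3 (e.le_iff_le.1 hle)
    · rintro ⟨h1, h2, h3⟩
      refine ⟨?_, ?_, ?_⟩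
      · exact e.le_iff_le.1 (by rw [hz]; exact h1)
      · exact e.lt_iff_lt.1 (by rw [htop]; exact h2)
      · exact fun hle => h3 (by rw [← hA]; exact e.monotone hle)
  let E : ↥(TT c) ≃ ↥(TT (g * c * g⁻¹)) := e.toEquiv.subtypeEquiv hmem
  have hle : ∀ A B : ↥(TT c), (E A : Subgroup G5) ≤ E B ↔ (A : Subgroup G5) ≤ B := by
    intro A B
    exact e.le_iff_le
  have F : compGraph ↥(TT c) ≃g compGraph ↥(TT (g * c * g⁻¹)) := by
    refine ⟨E, ?_⟩
    intro A B
    show ((E A ≠ E B) ∧ (E A ≤ E B ∨ E B ≤ E A)) ↔ (A ≠ B ∧ (A ≤ B ∨ B ≤ A))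
    apply and_congr
    · exact not_congr (Equiv.apply_eq_iff_eq E)
    · apply or_congr
      · exact (Subtype.coe_le_coe.symm.trans (hle A B)).trans Subtype.coe_le_coe
      · exact (Subtype.coe_le_coe.symm.trans (hle B A)).trans Subtype.coe_le_coe
  exact (SimpleGraph.Iso.connected_iff F).2 h

/-- For every cyclic subgroup `C` of `A₅`, the comparability graph of the poset
`T_C(S₅)` is connected. -/
theorem stmt13 (C : Subgroup (Equiv.Perm (Fin 5)))
    (hCN : C ≤ alternatingGroup (Fin 5)) (hC : IsCyclic ↥C) :
    (compGraph ↥(TCposet (Equiv.Perm (Fin 5)) (alternatingGroup (Fin 5)) C)).Connected := by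
  obtain ⟨⟨c, hcC⟩, hgen⟩ := hC.exists_generator
  have hCz : C = zpowers c := by
    apply le_antisymm
    · intro x hx
      obtain ⟨k, hk⟩ := hgen ⟨x, hx⟩
      exact mem_zpowers_iff.2 ⟨k, by simpa using congrArg Subtype.val hk⟩
    · exact zpowers_le.2 hcC
  rw [hCz]
  have hsign : Perm.sign c = 1 := Perm.mem_alternatingGroup.1 (hCN hcC)
  obtain ⟨e, -, -, hconj⟩ := conjd c hsign
  show (compGraph ↥(TT c)).Connected
  rcases hconj with h | h | h | h
  · exact conn_transfer e.2 c (by rw [h]; exact conn_1)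
  · exact conn_transfer e.2 c (by rw [h]; exact conn_22)
  · exact conn_transfer e.2 c (by rw [h]; exact conn_3)
  · exact conn_transfer e.2 c (by rw [h]; exact conn_r0)
end

section
/- Let G = S_5 be the symmetric group on 5 letters and N = A_5 the alternating group on 5 letters, a normal subgroup of G. Then m_{G,N} = 0; that is, Σ_{X ≤ S_5, X·A_5 = S_5} |X|·μ(X, S_5) = 0. -/
set_option maxRecDepth 8000

open Classical in
lemma subgroupMu_sum_indicator (G : Type*) [Group G] [Finite G] (Y : Subgroup G) :
    (∑ X : Subgroup G, if Y ≤ X then subgroupMu G X ⊤ else 0) =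
      if Y = ⊤ then 1 else 0 := by
  letI : LocallyFiniteOrder (Subgroup G) := Fintype.toLocallyFiniteOrder
  rw [← Finset.sum_filter]
  have h : Finset.univ.filter (fun X : Subgroup G => Y ≤ X) = Finset.Icc Y ⊤ := by
    ext X
    simp [Finset.mem_Icc, le_top]
  rw [h]
  have := IncidenceAlgebra.sum_Icc_mu_left (𝕜 := ℤ) Y (⊤ : Subgroup G)
  rw [← this]
  apply Finset.sum_congr rfl
  intro X _
  rfl

open Classical in
/-- For `G = S₅` and `N = A₅` one has `m_{G,N} = 0`; that is,
`Σ_{X ≤ S₅, X·A₅ = S₅} |X|·μ(X, S₅) = 0`. -/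
theorem stmt14 :
    mBouc (Equiv.Perm (Fin 5)) (alternatingGroup (Fin 5)) = 0 ∧
    (∑ X : Subgroup (Equiv.Perm (Fin 5)), if X ⊔ alternatingGroup (Fin 5) = ⊤ then
        (Nat.card X : ℤ) * subgroupMu (Equiv.Perm (Fin 5)) X ⊤
      else 0) = 0 := by
  classical
  set G := Equiv.Perm (Fin 5)
  set N := alternatingGroup (Fin 5) with hN
  -- S5 is not cyclic
  have hnotcyc : ∀ g : G, Subgroup.zpowers g ≠ ⊤ := by
    intro g hg
    have h1 : ∃ k : ℤ, g ^ k = Equiv.swap (0 : Fin 5) 1 := by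
      have : Equiv.swap (0 : Fin 5) 1 ∈ Subgroup.zpowers g := hg ▸ Subgroup.mem_top _
      exact Subgroup.mem_zpowers_iff.mp this
    have h2 : ∃ k : ℤ, g ^ k = Equiv.swap (1 : Fin 5) 2 := by
      have : Equiv.swap (1 : Fin 5) 2 ∈ Subgroup.zpowers g := hg ▸ Subgroup.mem_top _
      exact Subgroup.mem_zpowers_iff.mp this
    obtain ⟨a, ha⟩ := h1
    obtain ⟨b, hb⟩ := h2
    have hcomm : Equiv.swap (0 : Fin 5) 1 * Equiv.swap (1 : Fin 5) 2 =
        Equiv.swap (1 : Fin 5) 2 * Equiv.swap (0 : Fin 5) 1 := by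
      rw [← ha, ← hb, ← zpow_add, ← zpow_add, add_comm]
    exact absurd hcomm (by decide)
  -- N ≠ ⊤
  have hNtop : N ≠ ⊤ := by
    intro h
    have : Equiv.swap (0 : Fin 5) 1 ∈ N := h ▸ Subgroup.mem_top _
    rw [hN, Equiv.Perm.mem_alternatingGroup, Equiv.Perm.sign_swap (by decide)] at this
    exact absurd this (by decide)
  -- sign facts
  have hsign : ∀ g : G, g ∉ N → Equiv.Perm.sign g = -1 := by
    intro g hg
    rcases Int.units_eq_one_or (Equiv.Perm.sign g) with h | h
    · exact absurd ((Equiv.Perm.mem_alternatingGroup).mpr h) hg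
    · exact h
  -- maximality: ¬ X ≤ N → X ⊔ N = ⊤
  have hmax : ∀ X : Subgroup G, ¬ X ≤ N → X ⊔ N = ⊤ := by
    intro X hX
    rw [Subgroup.eq_top_iff']
    intro h
    by_cases hh : h ∈ N
    · exact Subgroup.mem_sup_right hh
    · obtain ⟨t, htX, htN⟩ := SetLike.not_le_iff_exists.mp hX
      have : t⁻¹ * h ∈ N := by
        rw [Equiv.Perm.mem_alternatingGroup, map_mul, map_inv, hsign t htN, hsign h hh]
        decide
      have := mul_mem (Subgroup.mem_sup_left htX) (Subgroup.mem_sup_right this)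
      rwa [mul_inv_cancel_left] at this
  -- conversely X ⊔ N = ⊤ → ¬ X ≤ N
  have hconv : ∀ X : Subgroup G, X ⊔ N = ⊤ → ¬ X ≤ N := by
    intro X h hle
    apply hNtop
    rw [← h, sup_eq_right.mpr hle]
  -- the counting: for X with X ⊔ N = ⊤, |X| = 2 * #odds in X
  have hcard : ∀ X : Subgroup G, X ⊔ N = ⊤ →
      (Nat.card X : ℤ) =
        2 * ((Finset.univ.filter (fun g : G => g ∈ X ∧ g ∉ N)).card : ℤ) := by
    intro X hX
    obtain ⟨t, htX, htN⟩ := SetLike.not_le_iff_exists.mp (hconv X hX)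
    have hbij : (Finset.univ.filter (fun g : G => g ∈ X ∧ g ∈ N)).card
        = (Finset.univ.filter (fun g : G => g ∈ X ∧ g ∉ N)).card := by
      apply Finset.card_bij (fun g _ => t * g)
      · intro g hg
        simp only [Finset.mem_filter, Finset.mem_univ, true_and] at hg ⊢
        refine ⟨mul_mem htX hg.1, ?_⟩
        intro hmem
        rw [Equiv.Perm.mem_alternatingGroup, map_mul, hsign t htN,
          (Equiv.Perm.mem_alternatingGroup).mp hg.2] at hmem
        exact absurd hmem (by decide)
      · intro g₁ h₁ g₂ h₂ h
        exact mul_left_cancel h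
      · intro g hg
        simp only [Finset.mem_filter, Finset.mem_univ, true_and] at hg
        refine ⟨t⁻¹ * g, ?_, by rw [← mul_assoc, mul_inv_cancel, one_mul]⟩
        simp only [Finset.mem_filter, Finset.mem_univ, true_and]
        refine ⟨mul_mem (inv_mem htX) hg.1, ?_⟩
        rw [Equiv.Perm.mem_alternatingGroup, map_mul, map_inv, hsign t htN, hsign g hg.2]
        decide
    have hsplit : (Nat.card X) =
        (Finset.univ.filter (fun g : G => g ∈ X ∧ g ∈ N)).card +
        (Finset.univ.filter (fun g : G => g ∈ X ∧ g ∉ N)).card := by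
      rw [Nat.card_eq_fintype_card, Fintype.card_subtype]
      rw [← Finset.card_filter_add_card_filter_not (p := fun g : G => g ∈ N)
        (s := Finset.univ.filter (fun g : G => g ∈ X))]
      rw [Finset.filter_filter, Finset.filter_filter]
    rw [hsplit, hbij]
    push_cast
    ring
  -- main integer computation
  have hint : (∑ X : Subgroup G, if X ⊔ N = ⊤ then
      (Nat.card X : ℤ) * subgroupMu G X ⊤ else 0) = 0 := by
    calc
      (∑ X : Subgroup G, if X ⊔ N = ⊤ then (Nat.card X : ℤ) * subgroupMu G X ⊤ else 0)
          = ∑ X : Subgroup G, if X ⊔ N = ⊤ then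
              2 * ((Finset.univ.filter (fun g : G => g ∈ X ∧ g ∉ N)).card : ℤ)
                * subgroupMu G X ⊤ else 0 := by
            apply Finset.sum_congr rfl
            intro X _
            split_ifs with h
            · rw [hcard X h]
            · rfl
      _ = 2 * ∑ X : Subgroup G, ∑ g : G, if g ∈ X ∧ g ∉ N then subgroupMu G X ⊤ else 0 := by
            rw [Finset.mul_sum]
            apply Finset.sum_congr rfl
            intro X _
            rw [← Finset.sum_filter, Finset.sum_const, nsmul_eq_mul]
            split_ifs with h
            · ring
            · -- X ⊔ N ≠ ⊤ : then no g ∈ X with g ∉ N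
              have : Finset.univ.filter (fun g : G => g ∈ X ∧ g ∉ N) = ∅ := by
                rw [Finset.filter_eq_empty_iff]
                intro g _
                rintro ⟨hgX, hgN⟩
                exact h (hmax X (fun hle => hgN (hle hgX)))
              rw [this]
              simp
      _ = 2 * ∑ g : G, ∑ X : Subgroup G, if g ∈ X ∧ g ∉ N then subgroupMu G X ⊤ else 0 := by
            rw [Finset.sum_comm]
      _ = 2 * ∑ g : G, (0 : ℤ) := by
            congr 1
            apply Finset.sum_congr rfl
            intro g _
            by_cases hg : g ∈ N
            · apply Finset.sum_eq_zero
              intro X _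
              rw [if_neg (by tauto)]
            · have : (∑ X : Subgroup G, if g ∈ X ∧ g ∉ N then subgroupMu G X ⊤ else 0)
                  = ∑ X : Subgroup G, if Subgroup.zpowers g ≤ X then subgroupMu G X ⊤ else 0 := by
                apply Finset.sum_congr rfl
                intro X _
                congr 1
                rw [Subgroup.zpowers_le]
                exact propext ⟨fun h => h.1, fun h => ⟨h, hg⟩⟩
              rw [this, subgroupMu_sum_indicator, if_neg (hnotcyc g)]
      _ = 0 := by simp
  refine ⟨?_, hint⟩
  rw [mBouc]
  have : (∑ X : Subgroup G, if X ⊔ N = ⊤ then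
      (Nat.card X : ℚ) * ((subgroupMu G X ⊤ : ℤ) : ℚ) else 0)
      = ((∑ X : Subgroup G, if X ⊔ N = ⊤ then
        (Nat.card X : ℤ) * subgroupMu G X ⊤ else 0 : ℤ) : ℚ) := by
    push_cast
    rfl
  rw [this, hint]
  simp
end
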